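/- arXiv:2401.03449 — 11 statements merged into one kernel-verified Lean document; each statement's English description precedes it below -/
import Mathlib

section
/- Let R be a ring in which every idempotent is central (an abelian ring). Then the following conditions are equivalent: (i) no idempotent of R is a sum of two units except 0, i.e. (U(R)+U(R)) ∩ Id(R) = {0}; (ii) R is UUSC; (iii) R is UUC; (iv) R is CUC; (v) R is CUSC. -/
/-- An element `a` of a ring is *uniquely strongly clean* if there is exactly one
idempotent `e` such that `a - e` is a unit and `a * e = e * a`. -/
def IsUSCleanElem {R : Type*} [Ring R] (a : R) : Prop :=
  ∃! e : R, IsIdempotentElem e ∧ IsUnit (a - e) ∧ a * e = e * a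

/-- An element `a` of a ring is *uniquely clean* if there is exactly one
idempotent `e` such that `a - e` is a unit. -/
def IsUCleanElem {R : Type*} [Ring R] (a : R) : Prop :=
  ∃! e : R, IsIdempotentElem e ∧ IsUnit (a - e)

/-- An element `a` of a ring is *clean* if it is the sum of an idempotent and a unit. -/
def IsCleanElem {R : Type*} [Ring R] (a : R) : Prop :=
  ∃ e : R, IsIdempotentElem e ∧ IsUnit (a - e)

/-- A ring is *CUSC* if every clean element is uniquely strongly clean. -/
def IsCUSC (R : Type*) [Ring R] : Prop := ∀ a : R, IsCleanElem a → IsUSCleanElem a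

/-- A ring is *UUSC* if every unit is uniquely strongly clean. -/
def IsUUSC (R : Type*) [Ring R] : Prop := ∀ a : R, IsUnit a → IsUSCleanElem a

/-- A ring is *CUC* if every clean element is uniquely clean. -/
def IsCUC (R : Type*) [Ring R] : Prop := ∀ a : R, IsCleanElem a → IsUCleanElem a

/-- A ring is *UUC* if every unit is uniquely clean. -/
def IsUUC (R : Type*) [Ring R] : Prop := ∀ a : R, IsUnit a → IsUCleanElem a

/-- A ring is *USC* if every element is uniquely strongly clean. -/
def IsUSCRing (R : Type*) [Ring R] : Prop := ∀ a : R, IsUSCleanElem a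

/-- A ring is *uniquely clean* (UC) if every element is uniquely clean. -/
def IsUCRing (R : Type*) [Ring R] : Prop := ∀ a : R, IsUCleanElem a

/-- A ring is *clean* if every element is clean. -/
def IsCleanRing (R : Type*) [Ring R] : Prop := ∀ a : R, IsCleanElem a

/-- The Jacobson radical of a (possibly noncommutative) ring, as a two-sided ideal. -/
abbrev jacobsonRad (R : Type*) [Ring R] : TwoSidedIdeal R := TwoSidedIdeal.jacobson ⊥

/-- The quotient ring `R / J(R)` of a ring by its Jacobson radical. -/
abbrev JacQuot (R : Type*) [Ring R] := (jacobsonRad R).ringCon.Quotient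

/-- A ring is *semi-potent* if every one-sided (left or right) ideal not contained in the
Jacobson radical contains a nonzero idempotent.  Left ideals are `Ideal R`, right ideals
are `Rᵐᵒᵖ`-submodules of `R`. -/
def Semipotent (R : Type*) [Ring R] : Prop :=
  (∀ I : Ideal R, ¬ (I : Set R) ⊆ (jacobsonRad R : Set R) →
      ∃ e ∈ I, e ≠ 0 ∧ IsIdempotentElem e) ∧
  (∀ I : Submodule Rᵐᵒᵖ R, ¬ (I : Set R) ⊆ (jacobsonRad R : Set R) →
      ∃ e ∈ I, e ≠ 0 ∧ IsIdempotentElem e)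

/-- Idempotents lift modulo the Jacobson radical: for every `a` with `a - a ^ 2 ∈ J(R)`
there is an idempotent `e` with `a - e ∈ J(R)`. -/
def IdempotentsLiftJac (R : Type*) [Ring R] : Prop :=
  ∀ a : R, a - a ^ 2 ∈ jacobsonRad R → ∃ e : R, IsIdempotentElem e ∧ a - e ∈ jacobsonRad R

/-- A ring is *potent* if it is semi-potent and idempotents lift modulo the Jacobson radical. -/
def Potent (R : Type*) [Ring R] : Prop := Semipotent R ∧ IdempotentsLiftJac R


private lemma key_lemma {R : Type*} [Ring R]
    (habelian : ∀ e : R, IsIdempotentElem e → ∀ r : R, e * r = r * e)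
    (h1 : ∀ e : R, IsIdempotentElem e → (∃ u v : R, IsUnit u ∧ IsUnit v ∧ e = u + v) → e = 0)
    {a e f : R} (he : IsIdempotentElem e) (hu : IsUnit (a - e))
    (hf : IsIdempotentElem f) (hv : IsUnit (a - f)) : e = f := by
  set w := e - f with hw
  have hc : e * f = f * e := habelian e he f
  have h3 : w * w * w = w := by
    have hee : e * e = e := he
    have hff : f * f = f := hf
    simp only [hw, sub_mul, mul_sub, hee, hff]
    rw [hc]
    noncomm_ring
    have h4 : f * (e * e) = f * (e * f) := by
      rw [hee, ← mul_assoc, ← hc, mul_assoc, hff]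
    rw [h4]
    abel
  set g := w * w with hg
  have hgidem : IsIdempotentElem g := by
    show g * g = g
    calc g * g = w * (w * w * w) := by rw [hg]; noncomm_ring
    _ = g := by rw [h3]
  have hwg : w * g = w := by rw [hg, ← mul_assoc, h3]
  have hgw : g * w = w := by rw [hg, mul_assoc, ← mul_assoc w w w, h3]
  set t := w + (1 - g) with ht
  have htt : t * t = 1 := by
    have : t * t = w * w + (w - w * g) + ((w - g * w) + (1 - g - (g - g * g))) := by
      rw [ht]; noncomm_ring
    rw [this, hwg, hgw, hgidem.eq, ← hg]
    abel
  have htu : IsUnit t := ⟨⟨t, t, htt, htt⟩, rfl⟩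
  have hgt : g = (a - f) * t - (a - e) * t := by
    have hwt : w * t = g := by
      calc w * t = w * w + (w - w * g) := by rw [ht]; noncomm_ring
      _ = g := by rw [hwg]; abel
    calc g = w * t := hwt.symm
    _ = ((a - f) - (a - e)) * t := by rw [hw]; noncomm_ring
    _ = (a - f) * t - (a - e) * t := by rw [sub_mul]
  have hgzero : g = 0 := by
    refine h1 g hgidem ⟨(a - f) * t, -((a - e) * t), hv.mul htu, (hu.mul htu).neg, ?_⟩
    rw [hgt]; abel
  have : w = 0 := by rw [← hgw, hgzero, zero_mul]
  exact sub_eq_zero.mp this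

/-- Proposition 2.1: for an abelian ring (all idempotents central), the conditions
(i) `(U(R)+U(R)) ∩ Id(R) = {0}`, (ii) UUSC, (iii) UUC, (iv) CUC, (v) CUSC are equivalent. -/
theorem stmt_0 (R : Type*) [Ring R]
    (habelian : ∀ e : R, IsIdempotentElem e → ∀ r : R, e * r = r * e) :
    List.TFAE
      [(∀ e : R, IsIdempotentElem e → (∃ u v : R, IsUnit u ∧ IsUnit v ∧ e = u + v) → e = 0),
       IsUUSC R,
       IsUUC R,
       IsCUC R,
       IsCUSC R] := by
  have pw : ∀ a : R, IsUSCleanElem a ↔ IsUCleanElem a := by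
    intro a
    apply existsUnique_congr
    intro e
    constructor
    · rintro ⟨h1, h2, _⟩; exact ⟨h1, h2⟩
    · rintro ⟨h1, h2⟩; exact ⟨h1, h2, (habelian e h1 a).symm⟩
  tfae_have 1 → 4 := by
    intro h1 a ⟨e, he, hu⟩
    exact ⟨e, ⟨he, hu⟩, fun f ⟨hf, hv⟩ => key_lemma habelian h1 hf hv he hu⟩
  tfae_have 4 → 3 := by
    intro h a ha
    exact h a ⟨0, IsIdempotentElem.zero, by simpa using ha⟩
  tfae_have 3 → 1 := by
    intro h e he ⟨u, v, hu, hv, heuv⟩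
    obtain ⟨e', -, huniq⟩ := h u hu
    have h0 : (0 : R) = e' := huniq 0 ⟨IsIdempotentElem.zero, by simpa using hu⟩
    have hE : e = e' := huniq e ⟨he, by
      rw [show u - e = -v from by rw [heuv]; abel]; exact hv.neg⟩
    rw [hE, ← h0]
  tfae_have 4 → 5 := fun h a ha => (pw a).mpr (h a ha)
  tfae_have 5 → 4 := fun h a ha => (pw a).mp (h a ha)
  tfae_have 3 → 2 := fun h a ha => (pw a).mpr (h a ha)
  tfae_have 2 → 3 := fun h a ha => (pw a).mp (h a ha)
  tfae_finish
end

section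
/- Let R be a ring and I an ideal of R with I ⊆ J(R), where J(R) is the Jacobson radical. If the quotient ring R/I is UUSC, then R is UUSC. -/
/-- Lemma 2.8(i): if `I ⊆ J(R)` is a two-sided ideal and `R/I` is UUSC, then `R` is UUSC. -/
theorem stmt_3 {R : Type*} [Ring R] (I : TwoSidedIdeal R)
    (hIJ : (I : Set R) ⊆ (jacobsonRad R : Set R))
    (hquot : IsUUSC I.ringCon.Quotient) : IsUUSC R := by
  intro a ha
  refine ⟨0, ⟨IsIdempotentElem.zero, by simpa using ha, by simp⟩, ?_⟩
  rintro e ⟨he, hu, hc⟩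
  set π := RingCon.mk' I.ringCon with hπ
  have huq := hquot (π a) (ha.map π)
  have h1 : IsIdempotentElem (π e) := he.map π
  have h2 : IsUnit (π a - π e) := by
    rw [← map_sub]; exact hu.map π
  have h3 : π a * π e = π e * π a := by
    rw [← map_mul, ← map_mul, hc]
  have h0 : (π e : I.ringCon.Quotient) = π 0 := by
    have := huq.unique ⟨h1, h2, h3⟩ ⟨IsIdempotentElem.zero, by simpa using ha.map π, by simp⟩
    simpa using this
  have heI : e ∈ I := by
    have : I.ringCon e 0 := (RingCon.eq _).mp h0
    rwa [TwoSidedIdeal.rel_iff, sub_zero] at this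
  have heJ : e ∈ jacobsonRad R := hIJ heI
  have hbot : TwoSidedIdeal.asIdeal (⊥ : TwoSidedIdeal R) = ⊥ := by
    ext x
    simp [TwoSidedIdeal.mem_asIdeal, TwoSidedIdeal.mem_bot]
  have heJ' : e ∈ Ideal.jacobson (⊥ : Ideal R) := by
    have h' : e ∈ TwoSidedIdeal.asIdeal (jacobsonRad R) := TwoSidedIdeal.mem_asIdeal.mpr heJ
    rw [TwoSidedIdeal.asIdeal_jacobson, hbot] at h'
    exact h'
  obtain ⟨z, hz⟩ := Ideal.mem_jacobson_iff.1 heJ' (-1)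
  rw [Ideal.mem_bot] at hz
  have h1 : z - z * e = 1 := by rw [← sub_eq_zero, ← hz]; noncomm_ring
  calc e = (z - z * e) * e := by rw [h1, one_mul]
    _ = z * e - z * (e * e) := by rw [sub_mul, mul_assoc]
    _ = 0 := by rw [he.eq, sub_self]
end

section
/- Suppose R = S + I where S is a subring of R containing 1_R, I is a (two-sided) ideal of R, and S ∩ I = {0}. If S is UUSC and the only idempotent of I that is a sum of two units of R is 0 (i.e. (U(R)+U(R)) ∩ Id(I) = {0}), then R is UUSC. -/
/-- Proposition 2.13: if `R = S + I` with `S` a (unital) subring, `I` a two-sided ideal,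
`S ∩ I = {0}`, `S` UUSC and `(U(R)+U(R)) ∩ Id(I) = {0}`, then `R` is UUSC. -/
theorem stmt_5 {R : Type*} [Ring R] (S : Subring R) (I : TwoSidedIdeal R)
    (hsum : ∀ r : R, ∃ s ∈ S, ∃ x ∈ I, r = s + x)
    (hint : ∀ x : R, x ∈ S → x ∈ I → x = 0)
    (hS : IsUUSC S)
    (hidem : ∀ e : R, e ∈ I → IsIdempotentElem e →
      (∃ u v : R, IsUnit u ∧ IsUnit v ∧ e = u + v) → e = 0) :
    IsUUSC R := by

  classical
  -- uniqueness of the decomposition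
  have huniq : ∀ s, s ∈ S → ∀ x, x ∈ I → ∀ s', s' ∈ S → ∀ x', x' ∈ I →
      s + x = s' + x' → s = s' := by
    intro s hs x hx s' hs' x' hx' h
    have h1 : s - s' ∈ S := sub_mem hs hs'
    have h2 : s - s' ∈ I := by
      have hxx : s - s' = x' - x := by
        rw [sub_eq_sub_iff_add_eq_add, h, add_comm]
      rw [hxx]; exact I.sub_mem hx' hx
    exact sub_eq_zero.mp (hint _ h1 h2)
  -- a unit of R projects to a "unit" of S
  have hunit : ∀ (r s x : R), s ∈ S → x ∈ I → r = s + x → IsUnit r →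
      ∃ t, t ∈ S ∧ s * t = 1 ∧ t * s = 1 := by
    intro r s x hs hx hr hru
    obtain ⟨u, hu⟩ := hru
    obtain ⟨t, ht, z, hz, hb⟩ := hsum (↑u⁻¹ : R)
    refine ⟨t, ht, ?_, ?_⟩
    · have h1 : s * t + (s * z + x * t + x * z) = 1 + 0 := by
        have h2 : r * (↑u⁻¹ : R) = 1 := by rw [← hu]; exact u.mul_inv
        rw [hr, hb] at h2
        rw [add_zero, ← h2]; noncomm_ring
      have := huniq _ (mul_mem hs ht) _
        (I.add_mem (I.add_mem (I.mul_mem_left _ _ hz) (I.mul_mem_right _ _ hx))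
          (I.mul_mem_left _ _ hz)) _ (one_mem S) _ I.zero_mem h1
      simpa using this
    · have h1 : t * s + (t * x + z * s + z * x) = 1 + 0 := by
        have h2 : (↑u⁻¹ : R) * r = 1 := by rw [← hu]; exact u.inv_mul
        rw [hr, hb] at h2
        rw [add_zero, ← h2]; noncomm_ring
      have := huniq _ (mul_mem ht hs) _
        (I.add_mem (I.add_mem (I.mul_mem_left _ _ hx) (I.mul_mem_right _ _ hz))
          (I.mul_mem_right _ _ hz)) _ (one_mem S) _ I.zero_mem h1
      simpa using this
  intro a ha
  refine ⟨0, ⟨IsIdempotentElem.zero, by simpa using ha, by simp⟩, ?_⟩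
  rintro e ⟨he, hu, hcomm⟩
  suffices heI : e ∈ I by
    exact hidem e heI he ⟨a, e - a, ha, by simpa using hu.neg, by abel⟩
  obtain ⟨s, hs, x, hx, hax⟩ := hsum a
  obtain ⟨f, hf, y, hy, hey⟩ := hsum e
  -- f is idempotent
  have hfidem : f * f = f := by
    have hexp : f * f + (f * y + y * f + y * y) = f + y := by
      have h' : (f + y) * (f + y) = f + y := by rw [← hey]; exact he
      calc f * f + (f * y + y * f + y * y) = (f + y) * (f + y) := by noncomm_ring
        _ = f + y := h' 
    exact huniq _ (mul_mem hf hf) _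
      (I.add_mem (I.add_mem (I.mul_mem_left _ _ hy) (I.mul_mem_right _ _ hy))
        (I.mul_mem_left _ _ hy)) _ hf _ hy hexp
  -- s * f = f * s
  have hsf : s * f = f * s := by
    have hexp : s * f + (s * y + x * f + x * y) = f * s + (f * x + y * s + y * x) := by
      have h' : (s + x) * (f + y) = (f + y) * (s + x) := by rw [← hax, ← hey]; exact hcomm
      calc s * f + (s * y + x * f + x * y) = (s + x) * (f + y) := by noncomm_ring
        _ = (f + y) * (s + x) := h'
        _ = f * s + (f * x + y * s + y * x) := by noncomm_ring
    exact huniq _ (mul_mem hs hf) _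
      (I.add_mem (I.add_mem (I.mul_mem_left _ _ hy) (I.mul_mem_right _ _ hx))
        (I.mul_mem_left _ _ hy)) _ (mul_mem hf hs) _
      (I.add_mem (I.add_mem (I.mul_mem_left _ _ hx) (I.mul_mem_right _ _ hy))
        (I.mul_mem_right _ _ hy)) hexp
  -- s is a unit of S
  obtain ⟨t, ht, hst, hts⟩ := hunit a s x hs hx hax ha
  have hsS : IsUnit (⟨s, hs⟩ : S) := by
    rw [isUnit_iff_exists]
    exact ⟨⟨t, ht⟩, Subtype.ext hst, Subtype.ext hts⟩
  -- s - f is a unit of S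
  obtain ⟨t', ht', hst', hts'⟩ := hunit (a - e) (s - f) (x - y)
    (sub_mem hs hf) (I.sub_mem hx hy) (by rw [hax, hey]; abel) hu
  have hsfS : IsUnit ((⟨s, hs⟩ : S) - ⟨f, hf⟩) := by
    rw [isUnit_iff_exists]
    exact ⟨⟨t', ht'⟩, Subtype.ext hst', Subtype.ext hts'⟩
  -- apply UUSC of S
  obtain ⟨g, -, hgu⟩ := hS (⟨s, hs⟩ : S) hsS
  have h0 : (0 : S) = g := hgu 0 ⟨IsIdempotentElem.zero, by simpa using hsS, by simp⟩
  have hfg : (⟨f, hf⟩ : S) = g :=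
    hgu ⟨f, hf⟩ ⟨Subtype.ext hfidem, hsfS, Subtype.ext hsf⟩
  have hf0 : f = 0 := by
    have := hfg.trans h0.symm
    exact congrArg Subtype.val this
  rw [hey, hf0, zero_add]
  exact hy
end

section
/- For a ring A, the formal power series ring A[[x]] is UUSC if and only if A is UUSC. -/
lemma idem_constantCoeff_zero {A : Type*} [Ring A] (E : PowerSeries A)
    (hE : IsIdempotentElem E) (h0 : PowerSeries.constantCoeff (R := A) E = 0) : E = 0 := by
  ext n
  rw [map_zero]
  induction n using Nat.strong_induction_on with
  | _ n ih =>
    calc PowerSeries.coeff (R := A) n E = PowerSeries.coeff (R := A) n (E * E) := by rw [hE.eq]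
      _ = ∑ p ∈ Finset.HasAntidiagonal.antidiagonal n, PowerSeries.coeff (R := A) p.1 E * PowerSeries.coeff (R := A) p.2 E :=
          PowerSeries.coeff_mul n E E
      _ = 0 := by
          apply Finset.sum_eq_zero
          intro p hp
          rw [Finset.HasAntidiagonal.mem_antidiagonal] at hp
          rcases Nat.eq_zero_or_pos p.2 with h2 | h2
          · rw [h2, PowerSeries.coeff_zero_eq_constantCoeff, h0, mul_zero]
          · have : p.1 < n := by omega
            rw [ih p.1 this, zero_mul]

/-- Corollary 2.14(i): `A[[x]]` is UUSC iff `A` is UUSC. -/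
theorem stmt_6 (A : Type*) [Ring A] : IsUUSC (PowerSeries A) ↔ IsUUSC A := by
  constructor
  · intro h a ha
    refine ⟨0, ⟨IsIdempotentElem.zero, by simpa using ha, by simp⟩, ?_⟩
    rintro e ⟨he, hu, hc⟩
    have hCa : IsUnit ((PowerSeries.C (R := A)) a) := ha.map _
    obtain ⟨E, hEmem, huniq⟩ := h _ hCa
    have h1 : (PowerSeries.C (R := A)) e = E := by
      refine huniq _ ⟨?_, ?_, ?_⟩
      · show _ * _ = _
        rw [← map_mul, he.eq]
      · rw [← map_sub]; exact hu.map _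
      · rw [← map_mul, hc, map_mul]
    have h2 : (0 : PowerSeries A) = E :=
      huniq 0 ⟨IsIdempotentElem.zero, by simpa using hCa, by simp⟩
    have : (PowerSeries.C (R := A)) e = 0 := h1.trans h2.symm
    have := congrArg (PowerSeries.constantCoeff (R := A)) this
    simpa using this
  · intro h f hf
    refine ⟨0, ⟨IsIdempotentElem.zero, by simpa using hf, by simp⟩, ?_⟩
    rintro E ⟨hE, hu, hc⟩
    set φ := PowerSeries.constantCoeff (R := A)
    have ha : IsUnit (φ f) := hf.map φ
    obtain ⟨e, hemem, huniq⟩ := h _ ha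
    have h1 : φ E = e := by
      refine huniq _ ⟨?_, ?_, ?_⟩
      · show _ * _ = _
        rw [← map_mul, hE.eq]
      · rw [← map_sub]; exact hu.map φ
      · rw [← map_mul, hc, map_mul]
    have h2 : (0 : A) = e := huniq 0 ⟨IsIdempotentElem.zero, by simpa using ha, by simp⟩
    have h0 : φ E = 0 := h1.trans h2.symm
    exact idem_constantCoeff_zero E hE h0
end

section
/- Let A be a ring and V an (A,A)-bimodule. The trivial extension T(A,V) = {(a,x) : a ∈ A, x ∈ V}, with componentwise addition and multiplication (a,x)(b,y) = (ab, ay + xb), is UUSC if and only if A is UUSC. -/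
lemma uusc_char {R : Type*} [Ring R] :
    IsUUSC R ↔ ∀ a : R, IsUnit a → ∀ e : R, IsIdempotentElem e → IsUnit (a - e) →
      a * e = e * a → e = 0 := by
  constructor
  · intro h a ha e he hu hc
    obtain ⟨f, _, uniq⟩ := h a ha
    have h0 : (0 : R) = f := uniq 0 ⟨IsIdempotentElem.zero, by simpa, by simp⟩
    have he' : e = f := uniq e ⟨he, hu, hc⟩
    rw [he', ← h0]
  · intro h a ha
    exact ⟨0, ⟨IsIdempotentElem.zero, by simpa, by simp⟩,
      fun e ⟨he, hu, hc⟩ => h a ha e he hu hc⟩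

/-- Corollary 2.14(iv): the trivial extension `T(A, V)` is UUSC iff `A` is UUSC. -/
theorem stmt_7 (A V : Type*) [Ring A] [AddCommGroup V] [Module A V] [Module Aᵐᵒᵖ V]
    [SMulCommClass A Aᵐᵒᵖ V] :
    IsUUSC (TrivSqZeroExt A V) ↔ IsUUSC A := by
  rw [uusc_char, uusc_char]
  constructor
  · intro h a ha e he hu hc
    have key := h (TrivSqZeroExt.inl a) (TrivSqZeroExt.isUnit_inl_iff.mpr ha)
      (TrivSqZeroExt.inl e) ?_ ?_ ?_
    · exact TrivSqZeroExt.inl_injective (by simpa using key)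
    · show _ * _ = _
      rw [TrivSqZeroExt.inl_mul_inl, he]
    · have : ((TrivSqZeroExt.inl a : TrivSqZeroExt A V) - TrivSqZeroExt.inl e)
          = TrivSqZeroExt.inl (a - e) := by
        simp [map_sub]
      rw [this]
      exact TrivSqZeroExt.isUnit_inl_iff.mpr hu
    · rw [TrivSqZeroExt.inl_mul_inl, TrivSqZeroExt.inl_mul_inl, hc]
  · intro h t ht E hE hU hc
    have ha : IsUnit t.fst := TrivSqZeroExt.isUnit_iff_isUnit_fst.mp ht
    have he : IsIdempotentElem E.fst := by
      have := congrArg TrivSqZeroExt.fst hE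
      exact (by simpa [TrivSqZeroExt.fst_mul] using this : E.fst * E.fst = E.fst)
    have hu : IsUnit (t.fst - E.fst) := by
      have := TrivSqZeroExt.isUnit_iff_isUnit_fst.mp hU
      simpa using this
    have hc' : t.fst * E.fst = E.fst * t.fst := by
      have := congrArg TrivSqZeroExt.fst hc
      simpa [TrivSqZeroExt.fst_mul] using this
    have he0 : E.fst = 0 := h t.fst ha E.fst he hu hc'
    have hsnd : E.snd = 0 := by
      have := congrArg TrivSqZeroExt.snd hE
      rw [TrivSqZeroExt.snd_mul, he0] at this
      simpa using this.symm
    ext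
    · simpa using he0
    · simpa using hsnd
end

section
/- For any ring A and any n ≥ 1, the ring T_n(A) of upper triangular n × n matrices over A is UUSC if and only if A is UUSC. -/
/-- The ring of upper triangular `n × n` matrices over `A`, as a subring of the
full matrix ring. -/
def upperTriangularSubring (n : ℕ) (A : Type*) [Ring A] :
    Subring (Matrix (Fin n) (Fin n) A) where
  carrier := {M | ∀ i j : Fin n, j < i → M i j = 0}
  zero_mem' := fun _ _ _ => rfl
  one_mem' := fun i j h => Matrix.one_apply_ne (ne_of_gt h)
  add_mem' := fun {M N} hM hN i j h => by
    simp [Matrix.add_apply, hM i j h, hN i j h]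
  neg_mem' := fun {M} hM i j h => by
    simp [Matrix.neg_apply, hM i j h]
  mul_mem' := fun {M N} hM hN i j h => by
    rw [Matrix.mul_apply]
    refine Finset.sum_eq_zero fun k _ => ?_
    rcases lt_or_ge k i with hk | hk
    · rw [hM i k hk, zero_mul]
    · rw [hN k j (lt_of_lt_of_le h hk), mul_zero]


section Aux
variable {A : Type*} [Ring A] {n : ℕ}

lemma mem_ut (M : upperTriangularSubring n A) : ∀ i j : Fin n, j < i → (M : Matrix (Fin n) (Fin n) A) i j = 0 :=
  M.2

/-- diagonal entry ring hom -/
def diagHom (i : Fin n) : upperTriangularSubring n A →+* A where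
  toFun M := (M : Matrix (Fin n) (Fin n) A) i i
  map_one' := Matrix.one_apply_eq i
  map_mul' M N := by
    show ((M : Matrix (Fin n) (Fin n) A) * N) i i = _
    rw [Matrix.mul_apply]
    refine Finset.sum_eq_single i (fun k _ hk => ?_) (by simp)
    rcases lt_or_gt_of_ne hk with h | h
    · rw [M.2 i k h, zero_mul]
    · rw [N.2 k i h, mul_zero]
  map_zero' := rfl
  map_add' M N := by
    show ((M : Matrix (Fin n) (Fin n) A) + N) i i = _
    simp [Matrix.add_apply]

/-- scalar embedding -/
def scalHom : A →+* upperTriangularSubring n A :=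
  (Matrix.scalar (Fin n)).codRestrict _ (fun a i j h => by
    simp [Matrix.scalar, Matrix.diagonal_apply_ne _ h.ne'])

lemma strict_idem_zero (M : Matrix (Fin n) (Fin n) A)
    (hlow : ∀ i j : Fin n, (j : ℕ) ≤ i → M i j = 0) (hidem : M * M = M) : M = 0 := by
  have key : ∀ d : ℕ, ∀ i j : Fin n, (j : ℕ) ≤ i + d → M i j = 0 := by
    intro d
    induction d with
    | zero => exact fun i j h => hlow i j (by omega)
    | succ d ih =>
      intro i j hj
      rw [← hidem, Matrix.mul_apply]
      refine Finset.sum_eq_zero fun k _ => ?_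
      rcases le_or_gt (k : ℕ) i with h | h
      · rw [hlow i k h, zero_mul]
      · rw [ih k j (by omega), mul_zero]
  ext i j
  exact key n i j (by omega)

end Aux

lemma isUUSC_iff' {R : Type*} [Ring R] :
    IsUUSC R ↔ ∀ u e : R, IsUnit u → IsIdempotentElem e → IsUnit (u - e) → u * e = e * u → e = 0 := by
  constructor
  · intro h u e hu he hue hc
    obtain ⟨E, _, hun⟩ := h u hu
    have h1 := hun e ⟨he, hue, hc⟩
    have h2 := hun 0 ⟨IsIdempotentElem.zero, by simpa using hu, by simp⟩
    rw [h1, h2]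
  · intro h u hu
    refine ⟨0, ⟨IsIdempotentElem.zero, by simpa using hu, by simp⟩, ?_⟩
    rintro e ⟨he, hue, hc⟩
    exact h u e hu he hue hc

/-- Corollary 2.14(vi): for any `n ≥ 1`, the upper triangular matrix ring `Tₙ(A)`
is UUSC iff `A` is UUSC. -/
theorem stmt_8 (A : Type*) [Ring A] (n : ℕ) (hn : 1 ≤ n) :
    IsUUSC (upperTriangularSubring n A) ↔ IsUUSC A := by
  rw [isUUSC_iff', isUUSC_iff']
  constructor
  · intro h u e hu he hue hc
    have h0 : scalHom (n := n) e = 0 := by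
      refine h (scalHom u) (scalHom e) (hu.map _) ?_ ?_ ?_
      · show scalHom e * scalHom e = scalHom e
        rw [← map_mul, he]
      · rw [← map_sub]; exact hue.map _
      · rw [← map_mul, ← map_mul, hc]
    have i0 : Fin n := ⟨0, hn⟩
    have := congrArg (diagHom i0) h0
    change (scalHom (n := n) e).val i0 i0 = (0 : upperTriangularSubring n A).val i0 i0 at this
    simpa [diagHom, scalHom, Matrix.scalar] using this
  · intro h U E hU hE hUE hc
    have hdiag : ∀ i : Fin n, (E : Matrix (Fin n) (Fin n) A) i i = 0 := by
      intro i
      refine h (diagHom i U) (diagHom i E) (hU.map _) ?_ ?_ ?_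
      · show diagHom i E * diagHom i E = diagHom i E
        rw [← map_mul, hE]
      · rw [← map_sub]; exact hUE.map _
      · rw [← map_mul, ← map_mul, hc]
    have : (E : Matrix (Fin n) (Fin n) A) = 0 := by
      refine strict_idem_zero _ (fun i j hij => ?_) ?_
      · rcases eq_or_lt_of_le (Fin.le_def.mpr hij) with rfl | hlt
        · exact hdiag j
        · exact E.2 i j hlt
      · exact congrArg Subtype.val hE
    exact Subtype.ext this
end

section
/- Let R be a semi-potent ring and write R̄ = R/J(R). The following are equivalent: (i) R̄ is UUSC; (ii) R̄ is Boolean; (iii) U(R) = 1 + J(R); (iv) every unit of R has the form e + j with e a central idempotent and j ∈ J(R); (v) for each unit a of R there exists a unique idempotent e with a - e ∈ J(R); (vi) for each unit a of R there exists an idempotent e with a - e ∈ J(R). -/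
section Helpers
variable {R : Type*} [Ring R]

lemma mem_jacRad_iff {x : R} :
    x ∈ jacobsonRad R ↔ ∀ y : R, ∃ z : R, z * (y * x + 1) = 1 := by
  rw [TwoSidedIdeal.mem_jacobson_iff]
  constructor <;> intro h y <;> obtain ⟨z, hz⟩ := h y <;> refine ⟨z, ?_⟩
  · rw [TwoSidedIdeal.mem_bot] at hz
    have h2 : z * (y * x + 1) - 1 = z * y * x + z - 1 := by noncomm_ring
    rw [← sub_eq_zero, h2, hz]
  · rw [TwoSidedIdeal.mem_bot]
    have h2 : z * y * x + z - 1 = z * (y * x + 1) - 1 := by noncomm_ring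
    rw [h2, hz, sub_self]

lemma isUnit_one_add_of_mem {j : R} (hj : j ∈ jacobsonRad R) : IsUnit (1 + j) := by
  have L : ∀ k : R, k ∈ jacobsonRad R → ∃ z : R, z * (1 + k) = 1 := by
    intro k hk
    obtain ⟨z, hz⟩ := mem_jacRad_iff.mp hk 1
    rw [one_mul, add_comm] at hz
    exact ⟨z, hz⟩
  obtain ⟨z, hz⟩ := L j hj
  have hzj : z = 1 + -(z * j) := by
    have h2 : z * (1 + j) = z * j + z := by noncomm_ring
    rw [h2] at hz
    have h3 := eq_sub_of_add_eq' hz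
    rw [sub_eq_add_neg] at h3
    exact h3
  obtain ⟨w, hw⟩ := L (-(z * j)) (neg_mem (TwoSidedIdeal.mul_mem_left _ _ _ hj))
  rw [← hzj] at hw
  have hwe : w = 1 + j := by
    calc w = w * (z * (1 + j)) := by rw [hz, mul_one]
    _ = (w * z) * (1 + j) := by rw [mul_assoc]
    _ = 1 + j := by rw [hw, one_mul]
  rw [hwe] at hw
  exact ⟨⟨1 + j, z, hw, hz⟩, rfl⟩

lemma isUnit_one_sub_of_mem {j : R} (hj : j ∈ jacobsonRad R) : IsUnit (1 - j) := by
  have := isUnit_one_add_of_mem (neg_mem hj)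
  rwa [← sub_eq_add_neg] at this

lemma idem_eq_zero_of_mem {e : R} (he : IsIdempotentElem e) (hj : e ∈ jacobsonRad R) :
    e = 0 := by
  obtain ⟨u, hu⟩ := isUnit_one_sub_of_mem hj
  have h1 : e * (1 - e) = 0 := by rw [mul_sub, mul_one, he.eq, sub_self]
  calc e = e * ((1 - e) * ↑u⁻¹) := by rw [← hu, u.mul_inv, mul_one]
  _ = (e * (1 - e)) * ↑u⁻¹ := by rw [mul_assoc]
  _ = 0 := by rw [h1, zero_mul]

variable (R) in
def jacMk : R →+* JacQuot R where
  toFun x := ((x : R) : (jacobsonRad R).ringCon.Quotient)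
  map_one' := rfl
  map_mul' _ _ := rfl
  map_zero' := rfl
  map_add' _ _ := rfl

lemma jacMk_surjective : Function.Surjective (jacMk R) := fun y =>
  Quotient.inductionOn' y fun x => ⟨x, rfl⟩

lemma jacMk_eq_iff {x y : R} : jacMk R x = jacMk R y ↔ x - y ∈ jacobsonRad R :=
  (RingCon.eq ((jacobsonRad R).ringCon)).trans (TwoSidedIdeal.rel_iff _ _ _)

lemma jacMk_eq_zero_iff {x : R} : jacMk R x = 0 ↔ x ∈ jacobsonRad R := by
  have h : (0 : JacQuot R) = jacMk R 0 := rfl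
  rw [h, jacMk_eq_iff, sub_zero]

lemma isUnit_of_jacMk {x : R} (h : IsUnit (jacMk R x)) : IsUnit x := by
  obtain ⟨u, hu⟩ := h
  obtain ⟨b, hb⟩ := jacMk_surjective (R := R) (↑u⁻¹)
  have h1 : jacMk R (x * b) = jacMk R 1 := by
    rw [map_mul, ← hu, hb, u.mul_inv, map_one]
  have h2 : jacMk R (b * x) = jacMk R 1 := by
    rw [map_mul, ← hu, hb, u.inv_mul, map_one]
  have hxb : IsUnit (x * b) := by
    have hm := jacMk_eq_iff.mp h1
    have := isUnit_one_add_of_mem hm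
    rwa [add_sub_cancel] at this
  have hbx : IsUnit (b * x) := by
    have hm := jacMk_eq_iff.mp h2
    have := isUnit_one_add_of_mem hm
    rwa [add_sub_cancel] at this
  obtain ⟨v, hv⟩ := hxb
  obtain ⟨w, hw⟩ := hbx
  have hc : x * (b * ↑v⁻¹) = 1 := by rw [← mul_assoc, ← hv, v.mul_inv]
  have hd : (↑w⁻¹ * b) * x = 1 := by rw [mul_assoc, ← hw, w.inv_mul]
  have heq : (↑w⁻¹ * b : R) = b * ↑v⁻¹ := by
    calc (↑w⁻¹ * b : R) = (↑w⁻¹ * b) * (x * (b * ↑v⁻¹)) := by rw [hc, mul_one]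
    _ = ((↑w⁻¹ * b) * x) * (b * ↑v⁻¹) := (mul_assoc _ _ _).symm
    _ = b * ↑v⁻¹ := by rw [hd, one_mul]
  exact isUnit_iff_exists.mpr ⟨b * ↑v⁻¹, hc, heq ▸ hd⟩

lemma jacQuot_rad_zero (s : JacQuot R) (hs : s ∈ jacobsonRad (JacQuot R)) : s = 0 := by
  obtain ⟨x, rfl⟩ := jacMk_surjective s
  rw [jacMk_eq_zero_iff, mem_jacRad_iff]
  intro y
  have h1 : IsUnit (jacMk R (y * x + 1)) := by
    have he : jacMk R (y * x + 1) = 1 + jacMk R y * jacMk R x := by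
      rw [map_add, map_mul, map_one, add_comm]
    rw [he]
    exact isUnit_one_add_of_mem (TwoSidedIdeal.mul_mem_left _ _ _ hs)
  obtain ⟨v, hv⟩ := isUnit_of_jacMk h1
  exact ⟨↑v⁻¹, by rw [← hv, v.inv_mul]⟩

lemma semipotent_quot (hsp : Semipotent R) : Semipotent (JacQuot R) := by
  constructor
  · intro I hI
    rw [Set.not_subset] at hI
    obtain ⟨s, hsI, hsJ⟩ := hI
    obtain ⟨x, rfl⟩ := jacMk_surjective s
    have hI' : ¬ ((I.comap (jacMk R) : Ideal R) : Set R) ⊆ (jacobsonRad R : Set R) := by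
      intro hsub
      have hx : x ∈ I.comap (jacMk R) := hsI
      have hxJ : x ∈ jacobsonRad R := hsub hx
      exact hsJ (by rw [jacMk_eq_zero_iff.mpr hxJ]; exact (jacobsonRad (JacQuot R)).zero_mem)
    obtain ⟨e, heI, hne, hid⟩ := hsp.1 _ hI'
    refine ⟨jacMk R e, heI, ?_, ?_⟩
    · intro h0
      exact hne (idem_eq_zero_of_mem hid (jacMk_eq_zero_iff.mp h0))
    · show jacMk R e * jacMk R e = jacMk R e
      rw [← map_mul, hid.eq]
  · intro I hI
    rw [Set.not_subset] at hI
    obtain ⟨s, hsI, hsJ⟩ := hI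
    obtain ⟨x, rfl⟩ := jacMk_surjective s
    set I' : Submodule Rᵐᵒᵖ R :=
      { carrier := jacMk R ⁻¹' I
        add_mem' := fun {a b} ha hb => by
          simp only [Set.mem_preimage, map_add] at *
          exact I.add_mem ha hb
        zero_mem' := by
          simp only [Set.mem_preimage, map_zero]
          exact I.zero_mem
        smul_mem' := fun c y hy => by
          simp only [Set.mem_preimage] at *
          have h1 : c • y = y * c.unop := rfl
          rw [h1, map_mul]
          have h2 : jacMk R y * jacMk R c.unop
              = (MulOpposite.op (jacMk R c.unop)) • jacMk R y := rfl
          rw [h2]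
          exact I.smul_mem _ hy } with hI'def
    have hI' : ¬ (I' : Set R) ⊆ (jacobsonRad R : Set R) := by
      intro hsub
      have hx : x ∈ I' := hsI
      have hxJ : x ∈ jacobsonRad R := hsub hx
      exact hsJ (by rw [jacMk_eq_zero_iff.mpr hxJ]; exact (jacobsonRad (JacQuot R)).zero_mem)
    obtain ⟨e, heI, hne, hid⟩ := hsp.2 _ hI'
    refine ⟨jacMk R e, heI, ?_, ?_⟩
    · intro h0
      exact hne (idem_eq_zero_of_mem hid (jacMk_eq_zero_iff.mp h0))
    · show jacMk R e * jacMk R e = jacMk R e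
      rw [← map_mul, hid.eq]

end Helpers

section Core
variable {S : Type*} [Ring S]

lemma corner_mul {G w w' : S} (hGG : G * G = G)
    (h2 : w * G = w) (h3 : G * w' = w') (h5 : w * w' = G) :
    (w + (1 - G)) * (w' + (1 - G)) = 1 := by
  have hexp : (w + (1 - G)) * (w' + (1 - G)) =
      w * w' + w - w * G + w' - G * w' + (1 - G - G + G * G) := by noncomm_ring
  rw [hexp, h5, h2, h3, hGG]
  abel

lemma exists_reflexive (hsp : Semipotent S)
    (hJ0 : ∀ x : S, x ∈ jacobsonRad S → x = 0) {x : S} (hx : x ≠ 0) :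
    ∃ r : S, r ≠ 0 ∧ r * (x * r) = r := by
  have hspan : ¬ ((Submodule.span Sᵐᵒᵖ {x} : Submodule Sᵐᵒᵖ S) : Set S)
      ⊆ (jacobsonRad S : Set S) := by
    intro hsub
    exact hx (hJ0 x (hsub (Submodule.subset_span (Set.mem_singleton x))))
  obtain ⟨e, heI, hne, hid⟩ := hsp.2 _ hspan
  obtain ⟨a, ha⟩ := Submodule.mem_span_singleton.mp heI
  set s := MulOpposite.unop a with hs
  have hes : x * s = e := ha
  refine ⟨s * e, ?_, ?_⟩
  · intro h0
    apply hne
    calc e = e * e := hid.symm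
    _ = (x * s) * e := by rw [hes]
    _ = x * (s * e) := mul_assoc _ _ _
    _ = 0 := by rw [h0, mul_zero]
  · have h1 : x * (s * e) = e := by
      calc x * (s * e) = (x * s) * e := (mul_assoc _ _ _).symm
      _ = e * e := by rw [hes]
      _ = e := hid
    rw [h1, mul_assoc, hid.eq]

lemma factF_contra
    (hF : ∀ a q : S, IsUnit a → IsIdempotentElem q → a * q = q * a → IsUnit (a - q) → q = 0)
    {E F y z : S}
    (hEE : E * E = E) (hFF : F * F = F) (hEF : E * F = 0) (hFE : F * E = 0)
    (hEy : E * y = y) (hyE : y * E = 0) (hFy : F * y = 0) (hyF : y * F = y)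
    (hEz : E * z = 0) (hzE : z * E = z) (hFz : F * z = z) (hzF : z * F = 0)
    (hyy : y * y = 0) (hzz : z * z = 0) (hyz : y * z = E) (hzy : z * y = F) :
    E = 0 := by
  set G := E + F with hG
  set w := y + z + F with hw
  have hGG : G * G = G := by
    simp only [hG, add_mul, mul_add, hEE, hFF, hEF, hFE, zero_add, add_zero]
  have hGw : G * w = w := by
    simp only [hG, hw, add_mul, mul_add, hEy, hEz, hEF, hFy, hFz, hFF]
    abel
  have hwG : w * G = w := by
    simp only [hG, hw, add_mul, mul_add, hyE, hyF, hzE, hzF, hFE, hFF]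
    abel
  have hww : w * w = E + y + z + F + F := by
    simp only [hw, add_mul, mul_add, hyy, hyz, hyF, hzy, hzz, hzF, hFy, hFz, hFF]
    abel
  have hww' : w * (w - G) = G := by
    rw [mul_sub, hwG, hww, hG, hw]
    abel
  have hw'w : (w - G) * w = G := by
    rw [sub_mul, hGw, hww, hG, hw]
    abel
  have hGw' : G * (w - G) = w - G := by rw [mul_sub, hGw, hGG]
  have hw'G : (w - G) * G = w - G := by rw [sub_mul, hwG, hGG]
  have hu1 : IsUnit (w + (1 - G)) :=
    ⟨⟨w + (1 - G), (w - G) + (1 - G),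
      corner_mul hGG hwG hGw' hww',
      corner_mul hGG hw'G hGw hw'w⟩, rfl⟩
  have hWsub : (w + (1 - G)) - G = (w - G) + (1 - G) := by abel
  have hu2 : IsUnit ((w + (1 - G)) - G) := by
    rw [hWsub]
    exact ⟨⟨(w - G) + (1 - G), w + (1 - G),
      corner_mul hGG hw'G hGw hw'w,
      corner_mul hGG hwG hGw' hww'⟩, rfl⟩
  have hcomm : (w + (1 - G)) * G = G * (w + (1 - G)) := by
    have hL : (w + (1 - G)) * G = w := by
      rw [add_mul, hwG, sub_mul, one_mul, hGG, sub_self, add_zero]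
    have hR : G * (w + (1 - G)) = w := by
      rw [mul_add, hGw, mul_sub, mul_one, hGG, sub_self, add_zero]
    rw [hL, hR]
  have hG0 : G = 0 := hF _ _ hu1 hGG hcomm hu2
  have hEG : E = G * E := by rw [hG, add_mul, hEE, hFE, add_zero]
  rw [hEG, hG0, zero_mul]

lemma reduced_of_hyps
    (hstr : ∀ x : S, x ≠ 0 → ∃ r : S, r ≠ 0 ∧ r * (x * r) = r)
    (hF : ∀ a q : S, IsUnit a → IsIdempotentElem q → a * q = q * a → IsUnit (a - q) → q = 0)
    {x : S} (hxx : x * x = 0) : x = 0 := by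
  by_contra hx
  obtain ⟨r, hr0, hr⟩ := hstr x hx
  have hx2 : ∀ t : S, x * (x * t) = 0 := fun t => by rw [← mul_assoc, hxx, zero_mul]
  have hr2 : ∀ t : S, r * (x * (r * t)) = r * t := fun t => by
    rw [← mul_assoc x r t, ← mul_assoc r (x * r) t, hr]
  have hE0 : (x * r : S) = 0 := by
    apply factF_contra hF
      (E := x * r) (F := r * x - x * (r * (r * x))) (y := x * (r * x))
      (z := r - x * (r * r)) <;>
    · simp only [mul_sub, sub_mul, mul_assoc, hr, hr2, hxx, hx2, mul_zero, zero_mul,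
        sub_zero, zero_sub, neg_zero, sub_self]
      try abel
  exact hr0 (by rw [← hr, hE0, mul_zero])

end Core

section Core2
variable {S : Type*} [Ring S]

lemma idem_central (hred : ∀ u : S, u * u = 0 → u = 0)
    {e : S} (he : IsIdempotentElem e) : ∀ t : S, e * t = t * e := by
  intro t
  have h0 : (1 - e) * e = 0 := by rw [sub_mul, one_mul, he.eq, sub_self]
  have h0' : e * (1 - e) = 0 := by rw [mul_sub, mul_one, he.eq, sub_self]
  have k1 : (e * t) * (1 - e) = 0 := by
    apply hred
    have hh : ((e * t) * (1 - e)) * ((e * t) * (1 - e))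
        = (e * t) * (((1 - e) * e) * (t * (1 - e))) := by
      simp only [mul_assoc]
    rw [hh, h0, zero_mul, mul_zero]
  have k2 : (1 - e) * (t * e) = 0 := by
    apply hred
    have hh : ((1 - e) * (t * e)) * ((1 - e) * (t * e))
        = (1 - e) * (t * ((e * (1 - e)) * (t * e))) := by
      simp only [mul_assoc]
    rw [hh, h0', zero_mul, mul_zero, mul_zero]
  have h1 : e * t = (e * t) * e := by
    rw [mul_sub, mul_one] at k1
    exact (sub_eq_zero.mp k1)
  have h2 : t * e = e * (t * e) := by
    rw [sub_mul, one_mul] at k2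
    exact (sub_eq_zero.mp k2)
  rw [h1, h2, mul_assoc]

lemma boolean_of_hyps
    (hstr : ∀ x : S, x ≠ 0 → ∃ r : S, r ≠ 0 ∧ r * (x * r) = r)
    (hF : ∀ a q : S, IsUnit a → IsIdempotentElem q → a * q = q * a → IsUnit (a - q) → q = 0)
    (a : S) : IsIdempotentElem a := by
  have hred : ∀ u : S, u * u = 0 → u = 0 := fun u hu => reduced_of_hyps hstr hF hu
  show a * a = a
  by_contra hne
  have hb0 : a - a * a ≠ 0 := sub_ne_zero.mpr fun h => hne h.symm
  obtain ⟨r, hr0, hr⟩ := hstr _ hb0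
  obtain ⟨b, hbdef⟩ : ∃ b : S, b = a - a * a := ⟨_, rfl⟩
  rw [← hbdef] at hr
  have hr2 : ∀ t : S, r * (b * (r * t)) = r * t := fun t => by
    rw [← mul_assoc b r t, ← mul_assoc r (b * r) t, hr]
  obtain ⟨e, hedef⟩ : ∃ e : S, e = b * r := ⟨_, rfl⟩
  have hre : r * e = r := by rw [hedef, hr]
  have hee : IsIdempotentElem e := by
    show e * e = e
    rw [hedef, mul_assoc, hr]
  have he0 : e ≠ 0 := fun h => hr0 (by rw [← hre, h, mul_zero])
  have hc := idem_central hred hee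
  have hte : ∀ t : S, t * e = e * t := fun t => (hc t).symm
  have hcm : ∀ t u : S, t * (e * u) = e * (t * u) := fun t u => by
    rw [← mul_assoc, ← hc t, mul_assoc]
  have hce : ∀ u : S, e * (e * u) = e * u := fun u => by rw [← mul_assoc, hee.eq]
  obtain ⟨f, hfdef⟩ : ∃ f : S, f = r * b := ⟨_, rfl⟩
  have hff : IsIdempotentElem f := by
    show f * f = f
    rw [hfdef]
    simp only [mul_assoc, hr2]
  have hfc := idem_central hred hff
  have hfr : f * r = r := by rw [hfdef, mul_assoc, hr]
  have hrf : r * f = r := by rw [← hfc r, hfr]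
  have hef : e * f = e := by rw [hedef, mul_assoc, hrf]
  obtain ⟨v, hvdef⟩ : ∃ v : S, v = e * (r * e) := ⟨_, rfl⟩
  have hA1 : (e * b) * v = e := by
    rw [hvdef]
    calc (e * b) * (e * (r * e)) = (e * b) * (e * (e * r)) := by rw [hte r]
    _ = (e * b) * (e * r) := by rw [hce r]
    _ = e * (b * (e * r)) := by rw [mul_assoc]
    _ = e * (e * (b * r)) := by rw [hcm b r]
    _ = e * (b * r) := hce _
    _ = e * e := by rw [← hedef]
    _ = e := hee.eq
  have hA2 : v * (e * b) = e := by
    rw [hvdef]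
    calc (e * (r * e)) * (e * b) = (e * (e * r)) * (e * b) := by rw [hte r]
    _ = (e * r) * (e * b) := by rw [hce r]
    _ = e * (r * (e * b)) := by rw [mul_assoc]
    _ = e * (e * (r * b)) := by rw [hcm r b]
    _ = e * (r * b) := hce _
    _ = e * f := by rw [← hfdef]
    _ = e := hef
  obtain ⟨c, hcdef⟩ : ∃ c : S, c = e * a := ⟨_, rfl⟩
  have hca : c * e = c := by
    rw [hcdef, mul_assoc, hte a, hce]
  have hec : e * c = c := by rw [hcdef, hce]
  have hcc : c * c = e * (a * a) := by
    rw [hcdef, mul_assoc, hcm a a, hce]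
  have heb : e * b = e * a - e * (a * a) := by rw [hbdef, mul_sub]
  have hceb1 : c * (e - c) = e * b := by
    rw [mul_sub, hca, hcc, heb, hcdef]
  have hceb2 : (e - c) * c = e * b := by
    rw [sub_mul, hec, hcc, heb, hcdef]
  obtain ⟨w', hw'def⟩ : ∃ w' : S, w' = (e - c) * v := ⟨_, rfl⟩
  have hcw' : c * w' = e := by rw [hw'def, ← mul_assoc, hceb1, hA1]
  have hlam : (v * (e - c)) * c = e := by rw [mul_assoc, hceb2, hA2]
  have hve : v * e = v := by rw [hvdef, mul_assoc, mul_assoc, hee.eq]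
  have hev : e * v = v := by rw [hvdef, hce]
  have hece : (e - c) * e = e - c := by rw [sub_mul, hee.eq, hca]
  have heec : e * (e - c) = e - c := by rw [mul_sub, hee.eq, hec]
  have hlame : (v * (e - c)) * e = v * (e - c) := by rw [mul_assoc, hece]
  have hew' : e * w' = w' := by rw [hw'def, ← mul_assoc, heec]
  have hw'e : w' * e = w' := by rw [hw'def, mul_assoc, hve]
  have hlamw : v * (e - c) = w' := by
    calc v * (e - c) = (v * (e - c)) * e := hlame.symm
    _ = (v * (e - c)) * (c * w') := by rw [hcw']
    _ = ((v * (e - c)) * c) * w' := (mul_assoc _ _ _).symm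
    _ = e * w' := by rw [hlam]
    _ = w' := hew'
  have hw'c : w' * c = e := by rw [← hlamw, hlam]
  have hu1 : IsUnit (c + (1 - e)) :=
    ⟨⟨c + (1 - e), w' + (1 - e),
      corner_mul hee.eq hca hew' hcw',
      corner_mul hee.eq hw'e hec hw'c⟩, rfl⟩
  obtain ⟨m', hm'def⟩ : ∃ m' : S, m' = -(c * v) := ⟨_, rfl⟩
  have hmm' : (c - e) * m' = e := by
    rw [hm'def, mul_neg, ← neg_sub e c, neg_mul, neg_neg, ← mul_assoc, hceb2, hA1]
  have hm'm : m' * (c - e) = e := by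
    rw [hm'def, ← neg_sub e c, neg_mul, mul_neg, neg_neg, mul_assoc, hlamw, hcw']
  have hem : e * (c - e) = c - e := by rw [mul_sub, hec, hee.eq]
  have hme : (c - e) * e = c - e := by rw [sub_mul, hca, hee.eq]
  have hem' : e * m' = m' := by rw [hm'def, mul_neg, ← mul_assoc, hec]
  have hm'e : m' * e = m' := by rw [hm'def, neg_mul, mul_assoc, hve]
  have hWsub : (c + (1 - e)) - e = (c - e) + (1 - e) := by abel
  have hu2 : IsUnit ((c + (1 - e)) - e) := by
    rw [hWsub]
    exact ⟨⟨(c - e) + (1 - e), m' + (1 - e),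
      corner_mul hee.eq hme hem' hmm',
      corner_mul hee.eq hm'e hem hm'm⟩, rfl⟩
  have hcomm : (c + (1 - e)) * e = e * (c + (1 - e)) := by
    have hL : (c + (1 - e)) * e = c := by
      rw [add_mul, hca, sub_mul, one_mul, hee.eq, sub_self, add_zero]
    have hR : e * (c + (1 - e)) = c := by
      rw [mul_add, hec, mul_sub, mul_one, hee.eq, sub_self, add_zero]
    rw [hL, hR]
  exact he0 (hF _ _ hu1 hee hcomm hu2)

end Core2


/-- Theorem 3.1: characterizations of semi-potent rings whose quotient `R/J(R)` is UUSC. -/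
theorem stmt_9 (R : Type*) [Ring R] (hsp : Semipotent R) :
    List.TFAE
      [IsUUSC (JacQuot R),
       ∀ a : JacQuot R, IsIdempotentElem a,
       ∀ a : R, IsUnit a ↔ a - 1 ∈ jacobsonRad R,
       ∀ a : R, IsUnit a → ∃ e j : R, IsIdempotentElem e ∧ (∀ r : R, e * r = r * e) ∧
         j ∈ jacobsonRad R ∧ a = e + j,
       ∀ a : R, IsUnit a → ∃! e : R, IsIdempotentElem e ∧ a - e ∈ jacobsonRad R,
       ∀ a : R, IsUnit a → ∃ e : R, IsIdempotentElem e ∧ a - e ∈ jacobsonRad R] := by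
  have hspQ : Semipotent (JacQuot R) := semipotent_quot hsp
  have hJ0 : ∀ s : JacQuot R, s ∈ jacobsonRad (JacQuot R) → s = 0 := jacQuot_rad_zero
  have hstrQ : ∀ x : JacQuot R, x ≠ 0 → ∃ r, r ≠ 0 ∧ r * (x * r) = r :=
    fun x hx => exists_reflexive hspQ hJ0 hx
  tfae_have 1 → 2 := by
    intro h1
    have hFq : ∀ a q : JacQuot R, IsUnit a → IsIdempotentElem q → a * q = q * a →
        IsUnit (a - q) → q = 0 := by
      intro a q ha hq hcomm hu
      exact (h1 a ha).unique ⟨hq, hu, hcomm⟩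
        ⟨IsIdempotentElem.zero, by simpa using ha, by simp⟩
    exact fun a => boolean_of_hyps hstrQ hFq a
  tfae_have 2 → 1 := by
    intro h2 u hu
    have hu1 : u = 1 := hu.mul_left_cancel (by rw [mul_one, (h2 u).eq])
    refine ⟨0, ⟨IsIdempotentElem.zero, by simpa using hu, by simp⟩, ?_⟩
    rintro q ⟨hq, hqu, hqc⟩
    rw [hu1] at hqu
    have h1q : (1 : JacQuot R) - q = 1 :=
      hqu.mul_left_cancel (by rw [mul_one, ((h2 q).one_sub).eq])
    exact sub_eq_self.mp h1q
  tfae_have 2 → 3 := by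
    intro h2 a
    constructor
    · intro ha
      have haq : IsUnit (jacMk R a) := ha.map _
      have h1 : jacMk R a = 1 := haq.mul_left_cancel (by rw [mul_one, (h2 _).eq])
      exact jacMk_eq_iff.mp (h1.trans (map_one (jacMk R)).symm)
    · intro hj
      have := isUnit_one_add_of_mem hj
      rwa [add_sub_cancel] at this
  tfae_have 3 → 4 := by
    intro h3 a ha
    exact ⟨1, a - 1, IsIdempotentElem.one, fun r => by rw [one_mul, mul_one],
      (h3 a).mp ha, by abel⟩
  tfae_have 4 → 6 := by
    intro h4 a ha
    obtain ⟨e, j, he, _, hj, haej⟩ := h4 a ha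
    exact ⟨e, he, by rw [haej, add_sub_cancel_left]; exact hj⟩
  tfae_have 3 → 5 := by
    intro h3 a ha
    refine ⟨1, ⟨IsIdempotentElem.one, (h3 a).mp ha⟩, ?_⟩
    rintro q ⟨hq, hqj⟩
    have hs := (jacobsonRad R).sub_mem hqj ((h3 a).mp ha)
    have h' : (a - q) - (a - 1) = 1 - q := by abel
    rw [h'] at hs
    have := idem_eq_zero_of_mem hq.one_sub hs
    exact (sub_eq_zero.mp this).symm
  tfae_have 5 → 6 := by
    intro h5 a ha
    exact (h5 a ha).exists
  tfae_have 6 → 2 := by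
    intro h6
    have hU1 : ∀ u : JacQuot R, IsUnit u → u = 1 := by
      intro u hu
      obtain ⟨x, rfl⟩ := jacMk_surjective u
      obtain ⟨e, he, hej⟩ := h6 x (isUnit_of_jacMk hu)
      have hxe : jacMk R x = jacMk R e := jacMk_eq_iff.mpr hej
      have hqe : IsIdempotentElem (jacMk R e) := by
        show jacMk R e * jacMk R e = jacMk R e
        rw [← map_mul, he.eq]
      rw [hxe] at hu ⊢
      exact hu.mul_left_cancel (by rw [mul_one, hqe.eq])
    have hFq : ∀ a q : JacQuot R, IsUnit a → IsIdempotentElem q → a * q = q * a →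
        IsUnit (a - q) → q = 0 := by
      intro a q ha hq hcomm hsu
      rw [hU1 a ha] at hsu
      have h1q : (1 : JacQuot R) - q = 1 :=
        hsu.mul_left_cancel (by rw [mul_one, hq.one_sub.eq])
      exact sub_eq_self.mp h1q
    exact fun a => boolean_of_hyps hstrQ hFq a
  tfae_finish
end

section
/- Every potent UUSC ring is left quasi-duo and right quasi-duo, i.e., every maximal left ideal and every maximal right ideal is a two-sided ideal. -/
section Aux
variable {R : Type*} [Ring R]

private lemma memJ_iff {x : R} :
    x ∈ jacobsonRad R ↔ ∀ y, ∃ z, z * y * x + z - 1 = 0 := by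
  rw [TwoSidedIdeal.mem_jacobson_iff]
  simp [TwoSidedIdeal.mem_bot]

private lemma left_inv_of_memJ {x : R} (hx : x ∈ jacobsonRad R) :
    ∃ z : R, z * (1 + x) = 1 ∧ z - 1 ∈ jacobsonRad R := by
  obtain ⟨z, hz⟩ := memJ_iff.1 hx 1
  rw [mul_one] at hz
  refine ⟨z, ?_, ?_⟩
  · rw [mul_add, mul_one]
    have := eq_of_sub_eq_zero hz
    rw [← this]; abel
  · have hz1 : z - 1 = -(z * x) := by
      have := eq_of_sub_eq_zero hz
      rw [← this]; abel
    rw [hz1]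
    exact (jacobsonRad R).neg_mem ((jacobsonRad R).mul_mem_left z x hx)

private lemma isUnit_one_add {x : R} (hx : x ∈ jacobsonRad R) : IsUnit (1 + x) := by
  obtain ⟨z, hz1, hzJ⟩ := left_inv_of_memJ hx
  obtain ⟨z', hz'1, _⟩ := left_inv_of_memJ hzJ
  rw [show (1 : R) + (z - 1) = z from by abel] at hz'1
  have hz'eq : z' = 1 + x := by
    calc z' = z' * (z * (1 + x)) := by rw [hz1, mul_one]
      _ = (z' * z) * (1 + x) := by rw [mul_assoc]
      _ = 1 + x := by rw [hz'1, one_mul]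
  exact ⟨⟨1 + x, z, by rw [← hz'eq]; exact hz'1, hz1⟩, rfl⟩

private lemma isUnit_of_left_right {M : Type*} [Monoid M] {x l r : M}
    (hr : x * r = 1) (hl : l * x = 1) : IsUnit x := by
  have hrl : r = l := by rw [← one_mul r, ← hl, mul_assoc, hr, mul_one]
  exact ⟨⟨x, r, hr, by rw [hrl, hl]⟩, rfl⟩

variable (R) in
private def toQ : R →+* JacQuot R := RingCon.mk' _

private lemma toQ_eq_iff {x y : R} : toQ R x = toQ R y ↔ x - y ∈ jacobsonRad R :=
  (RingCon.eq ((jacobsonRad R).ringCon)).trans (TwoSidedIdeal.rel_iff _ x y)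

private lemma toQ_zero_iff {x : R} : toQ R x = 0 ↔ x ∈ jacobsonRad R := by
  rw [show (0 : JacQuot R) = toQ R 0 from (map_zero _).symm, toQ_eq_iff, sub_zero]

private lemma toQ_surjective : Function.Surjective (toQ R) :=
  fun t => ⟨t.out, t.out_eq⟩

private lemma isUnit_of_toQ_lr {u r l : R}
    (h1 : toQ R (u * r) = 1) (h2 : toQ R (l * u) = 1) : IsUnit u := by
  have m1 : u * r - 1 ∈ jacobsonRad R := toQ_eq_iff.1 (by rw [h1, map_one])
  have m2 : l * u - 1 ∈ jacobsonRad R := toQ_eq_iff.1 (by rw [h2, map_one])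
  have U1 : IsUnit (u * r) := by
    have := isUnit_one_add m1
    rwa [show (1 : R) + (u * r - 1) = u * r from by abel] at this
  have U2 : IsUnit (l * u) := by
    have := isUnit_one_add m2
    rwa [show (1 : R) + (l * u - 1) = l * u from by abel] at this
  obtain ⟨s, hs⟩ := U1
  obtain ⟨t, ht⟩ := U2
  have hru : u * (r * (↑s⁻¹ : R)) = 1 := by
    rw [← mul_assoc, ← hs]; exact s.mul_inv
  have hlu : ((↑t⁻¹ : R) * l) * u = 1 := by
    rw [mul_assoc, ← ht]; exact t.inv_mul
  exact isUnit_of_left_right hru hlu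

private lemma idem_in_J {e : R} (he : IsIdempotentElem e) (hJ : e ∈ jacobsonRad R) :
    e = 0 := by
  have hu : IsUnit (1 + -e) := isUnit_one_add ((jacobsonRad R).neg_mem hJ)
  obtain ⟨v, hv⟩ := hu
  have h0 : e * (1 + -e) = 0 := by
    rw [mul_add, mul_one, mul_neg, he]; abel
  calc e = e * ((1 + -e) * (↑v⁻¹ : R)) := by rw [← hv, v.mul_inv, mul_one]
    _ = (e * (1 + -e)) * (↑v⁻¹ : R) := by rw [mul_assoc]
    _ = 0 := by rw [h0, zero_mul]

private lemma harvest (hsp : Semipotent R) {c : R} (hc : c ∉ jacobsonRad R) :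
    ∃ b : R, b * c * b = b ∧ IsIdempotentElem (c * b) ∧ IsIdempotentElem (b * c) ∧
      c * b ∉ jacobsonRad R := by
  have hI : ¬ ((Ideal.span {c} : Ideal R) : Set R) ⊆ (jacobsonRad R : Set R) :=
    fun hsub => hc (hsub (Ideal.subset_span (Set.mem_singleton c)))
  obtain ⟨g, hgI, hg0, hgid⟩ := hsp.1 _ hI
  obtain ⟨t, ht⟩ := Submodule.mem_span_singleton.1 hgI
  have htc : t * c = g := by rw [← smul_eq_mul]; exact ht
  have hgg : g * g = g := hgid
  have rtc : ∀ x : R, t * (c * x) = g * x := fun x => by rw [← mul_assoc, htc]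
  have rgg : ∀ x : R, g * (g * x) = g * x := fun x => by rw [← mul_assoc, hgg]
  have hbcb : (g * t) * c * (g * t) = g * t := by
    simp only [mul_assoc, rtc, rgg]
  have he : IsIdempotentElem (c * (g * t)) := by
    show (c * (g * t)) * (c * (g * t)) = c * (g * t)
    simp only [mul_assoc, rtc, rgg]
  have hf : IsIdempotentElem ((g * t) * c) := by
    show ((g * t) * c) * ((g * t) * c) = (g * t) * c
    simp only [mul_assoc, rtc, rgg, htc, hgg]
  refine ⟨g * t, hbcb, he, hf, ?_⟩
  intro hmem
  have h0 : c * (g * t) = 0 := idem_in_J he hmem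
  have key1 : (g * t) * (c * (g * t)) = g * t := by
    simp only [mul_assoc, rtc, rgg]
  have hb0 : g * t = 0 := by rw [← key1, h0, mul_zero]
  have : g = 0 := by
    calc g = g * g := hgg.symm
      _ = g * (t * c) := by rw [htc]
      _ = (g * t) * c := by rw [mul_assoc]
      _ = 0 := by rw [hb0, zero_mul]
  exact hg0 this


private lemma uusc_star (h : IsUUSC R) {u e : R} (hu : IsUnit u) (he : IsIdempotentElem e)
    (hcomm : u * e = e * u) (hue : IsUnit (u - e)) : e = 0 := by
  obtain ⟨e', -, huniq⟩ := h u hu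
  have h1 : e = e' := huniq e ⟨he, hue, hcomm⟩
  have h2 : (0 : R) = e' := huniq 0 ⟨IsIdempotentElem.zero, by simpa using hu, by simp⟩
  rw [h1, ← h2]

private lemma key (h : IsUUSC R) {g v w w' w₂ w₂' : R}
    (hg : IsIdempotentElem g) (hgJ : g ∉ jacobsonRad R)
    (hv : toQ R (g * v * g) = toQ R v)
    (h1 : toQ R (v * w) = toQ R g) (h2 : toQ R (w' * v) = toQ R g)
    (h3 : toQ R ((v - g) * w₂) = toQ R g) (h4 : toQ R (w₂' * (v - g)) = toQ R g) :
    False := by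
  set u : R := g * v * g + 1 - g with hu_def
  have hgg : g * g = g := hg
  -- images in the quotient
  set π := toQ R
  set G := π g with hG
  set V := π v with hV
  have hGG : G * G = G := by rw [hG, ← map_mul, hgg]
  have hGVG : G * V * G = V := by
    rw [hG, hV, ← map_mul, ← map_mul]; exact hv
  have hGV : G * V = V := by
    conv_lhs => rw [← hGVG]
    rw [← mul_assoc, ← mul_assoc, hGG]
    exact hGVG
  have hVG : V * G = V := by
    conv_lhs => rw [← hGVG]
    rw [mul_assoc, hGG]
    exact hGVG
  have rGG : ∀ x, G * (G * x) = G * x := fun x => by rw [← mul_assoc, hGG]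
  have rVG : ∀ x, V * (G * x) = V * x := fun x => by rw [← mul_assoc, hVG]
  -- u is a unit
  have hπu : π u = V + 1 - G := by
    rw [hu_def]; push_cast [map_add, map_sub, map_mul, map_one]
    rw [← hG, ← hV, hGVG]
  have hVW : V * (π w) = G := by rw [hV, hG, ← map_mul]; exact h1
  have hW'V : (π w') * V = G := by rw [hV, hG, ← map_mul]; exact h2
  have rVW : ∀ x, V * (π w * x) = G * x := fun x => by rw [← mul_assoc, hVW]
  have hu : IsUnit u := by
    apply isUnit_of_toQ_lr (r := g * w * g + 1 - g) (l := g * w' * g + 1 - g)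
    · rw [map_mul, hπu]
      push_cast [map_add, map_sub, map_mul, map_one]
      rw [← hG, show toQ R = π from rfl]
      simp only [mul_add, add_mul, mul_sub, sub_mul, mul_one, one_mul, mul_assoc,
        rGG, rVG, rVW, hVW, hGG, hGV, hVG]
      abel
    · rw [map_mul, hπu]
      push_cast [map_add, map_sub, map_mul, map_one]
      rw [← hG, show toQ R = π from rfl]
      simp only [mul_add, add_mul, mul_sub, sub_mul, mul_one, one_mul, mul_assoc,
        rGG, hGV, hGG, hW'V]
      simp only [← mul_assoc, hW'V, hGG, hVG]
      abel
  -- u - g is a unit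
  have hVW₂ : V * (π w₂) = G + G * (π w₂) := by
    have h3' : (V - G) * (π w₂) = G := by rw [hV, hG, ← map_sub, ← map_mul]; exact h3
    rw [sub_mul] at h3'
    calc V * π w₂ = (V * π w₂ - G * π w₂) + G * π w₂ := by abel
      _ = G + G * π w₂ := by rw [h3']
  have rVW₂ : ∀ x, V * (π w₂ * x) = G * x + G * (π w₂ * x) := fun x => by
    rw [← mul_assoc, hVW₂, add_mul, mul_assoc]
  have hW₂'V : (π w₂') * V = G + (π w₂') * G := by
    have h4' : (π w₂') * (V - G) = G := by rw [hV, hG, ← map_sub, ← map_mul]; exact h4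
    rw [mul_sub] at h4'
    calc (π w₂') * V = ((π w₂') * V - (π w₂') * G) + (π w₂') * G := by abel
      _ = G + (π w₂') * G := by rw [h4']
  have hue : IsUnit (u - g) := by
    apply isUnit_of_toQ_lr (r := g * w₂ * g + 1 - g) (l := g * w₂' * g + 1 - g)
    · rw [map_mul, map_sub, hπu]
      push_cast [map_add, map_sub, map_mul, map_one]
      rw [← hG, show toQ R = π from rfl]
      simp only [mul_add, add_mul, mul_sub, sub_mul, mul_one, one_mul, mul_assoc,
        rGG, rVG, rVW₂, hVW₂, hGG, hGV, hVG]
      abel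
    · rw [map_mul, map_sub, map_sub, hπu]
      push_cast [map_add, map_sub, map_mul, map_one]
      rw [← hG, show toQ R = π from rfl]
      simp only [mul_add, add_mul, mul_sub, sub_mul, mul_one, one_mul, mul_assoc,
        rGG, hGV, hGG, hW₂'V, hVG]
      abel
  -- u commutes with g
  have hgvgg : (g * v * g) * g = g * v * g := by rw [mul_assoc, hgg]
  have hggvg : g * (g * v * g) = g * v * g := by
    rw [← mul_assoc, ← mul_assoc, hgg]
  have hcomm : u * g = g * u := by
    rw [hu_def]
    calc (g * v * g + 1 - g) * g = (g * v * g) * g + 1 * g - g * g := by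
          rw [sub_mul, add_mul]
      _ = g * v * g := by rw [hgvgg, one_mul, hgg]; abel
      _ = g * (g * v * g) + g * 1 - g * g := by rw [hggvg, mul_one, hgg]; abel
      _ = g * (g * v * g + 1 - g) := by rw [mul_sub, mul_add]
  have hgne : g ≠ 0 := by
    intro h0; rw [h0] at hgJ; exact hgJ (jacobsonRad R).zero_mem
  exact hgne (uusc_star h hu hg hcomm hue)


private lemma matrix_units {Q : Type*} [Ring Q] {N B E F H G V W : Q}
    (hN : N * N = 0) (hB : B * (N * B) = B)
    (hE : E = N * B) (hF : F = B * N) (hH : H = F - E * F) (hG : G = E + H)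
    (hV : V = E + E * N + (B - E * B)) (hW : W = E * N + (B - E * B) - H) :
    G * G = G ∧ G * (V * G) = V ∧ V * W = G ∧ W * V = G ∧ W = V - G ∧ G * E = E := by
  subst hE hF hH hG hV hW
  have r1 : ∀ x : Q, N * (N * x) = 0 := fun x => by rw [← mul_assoc, hN, zero_mul]
  have r2 : ∀ x : Q, B * (N * (B * x)) = B * x := fun x => by
    rw [← mul_assoc, ← mul_assoc, mul_assoc B N B, hB]
  refine ⟨?_, ?_, ?_, ?_, ?_, ?_⟩ <;>
    (try simp only [mul_add, add_mul, mul_sub, sub_mul, mul_one, one_mul, mul_assoc,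
      hN, hB, r1, r2, mul_zero, zero_mul, sub_zero, zero_sub, add_zero, zero_add]) <;>
    abel

private lemma jreduced (hsp : Semipotent R) (hlift : IdempotentsLiftJac R) (h : IsUUSC R)
    {n : R} (hn : n * n ∈ jacobsonRad R) : n ∈ jacobsonRad R := by
  by_contra hnJ
  obtain ⟨b, hbnb, he, hf, heJ⟩ := harvest hsp hnJ
  set π := toQ R with hπ_def
  have hNN : π n * π n = 0 := by rw [← map_mul]; exact toQ_zero_iff.2 hn
  have hb' : b * (n * b) = b := by rw [← mul_assoc]; exact hbnb
  have hBNB : π b * (π n * π b) = π b := by rw [← map_mul, ← map_mul, hb']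
  obtain ⟨hGG, hGVG, hVW, hWV, hWVG, hGE⟩ :=
    matrix_units (N := π n) (B := π b) hNN hBNB rfl rfl rfl rfl rfl rfl
  set a : R := n * b + (b * n - (n * b) * (b * n)) with ha_def
  have hπa : π a = π n * π b + (π b * π n - (π n * π b) * (π b * π n)) := by
    rw [ha_def]; simp only [map_add, map_sub, map_mul]
  have haa : a - a ^ 2 ∈ jacobsonRad R := by
    rw [← toQ_zero_iff, map_sub, map_pow, hπa, sq, hGG, sub_self]
  obtain ⟨g, hgid, hgJ⟩ := hlift a haa
  have hπg : π g = π n * π b + (π b * π n - (π n * π b) * (π b * π n)) := by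
    rw [← hπa]; exact (toQ_eq_iff.2 hgJ).symm
  have hgnotJ : g ∉ jacobsonRad R := by
    intro hmem
    have h0 : π g = 0 := toQ_zero_iff.2 hmem
    have hE0 : π n * π b = 0 := by rw [← hGE, ← hπg, h0, zero_mul]
    exact heJ (toQ_zero_iff.1 (by rw [map_mul]; exact hE0))
  exact key h hgid hgnotJ
    (v := n * b + (n * b) * n + (b - (n * b) * b))
    (w := (n * b) * n + (b - (n * b) * b) - (b * n - (n * b) * (b * n)))
    (w' := (n * b) * n + (b - (n * b) * b) - (b * n - (n * b) * (b * n)))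
    (w₂ := n * b + (n * b) * n + (b - (n * b) * b))
    (w₂' := n * b + (n * b) * n + (b - (n * b) * b))
    (by rw [map_mul, map_mul, hπg]
        simp only [map_add, map_sub, map_mul]
        rw [mul_assoc]; exact hGVG)
    (by rw [map_mul, hπg]; simp only [map_add, map_sub, map_mul]; exact hVW)
    (by rw [map_mul, hπg]; simp only [map_add, map_sub, map_mul]; exact hWV)
    (by rw [map_mul, map_sub, hπg]
        simp only [map_add, map_sub, map_mul]
        rw [← hWVG]; exact hWV)
    (by rw [map_mul, map_sub, hπg]
        simp only [map_add, map_sub, map_mul]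
        rw [← hWVG]; exact hVW)


private lemma central_of_idem (hsp : Semipotent R) (hlift : IdempotentsLiftJac R)
    (h : IsUUSC R) {e : R} (he : IsIdempotentElem e) :
    ∀ t : JacQuot R, toQ R e * t = t * toQ R e := by
  intro t
  obtain ⟨r, rfl⟩ := toQ_surjective t
  have hee : e * e = e := he
  have key0 : (e * r - e * r * e) * e = 0 := by
    calc (e * r - e * r * e) * e = (e * r) * e - ((e * r) * e) * e := by rw [sub_mul]
      _ = (e * r) * e - (e * r) * (e * e) := by rw [mul_assoc (e * r) e e]
      _ = 0 := by rw [hee, sub_self]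
  have t1 : (e * r - e * r * e) * (e * r) = 0 := by rw [← mul_assoc, key0, zero_mul]
  have hn1 : (e * r - e * r * e) * (e * r - e * r * e) = 0 := by
    have t2 : (e * r - e * r * e) * (e * r * e) = 0 := by
      rw [show e * r * e = (e * r) * e from rfl, ← mul_assoc, t1, zero_mul]
    rw [mul_sub, t1, t2, sub_self]
  have key0' : e * (r * e - e * r * e) = 0 := by
    calc e * (r * e - e * r * e) = e * (r * e) - e * (e * r * e) := by rw [mul_sub]
      _ = (e * r) * e - ((e * e) * r) * e := by
          rw [← mul_assoc, ← mul_assoc, ← mul_assoc]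
      _ = 0 := by rw [hee, sub_self]
  have hn2 : (r * e - e * r * e) * (r * e - e * r * e) = 0 := by
    rw [sub_mul, mul_assoc r e _, key0', mul_zero, mul_assoc (e * r) e _, key0',
      mul_zero, sub_self]
  have m1 : e * r - e * r * e ∈ jacobsonRad R :=
    jreduced hsp hlift h (by rw [hn1]; exact (jacobsonRad R).zero_mem)
  have m2 : r * e - e * r * e ∈ jacobsonRad R :=
    jreduced hsp hlift h (by rw [hn2]; exact (jacobsonRad R).zero_mem)
  calc toQ R e * toQ R r = toQ R (e * r) := (map_mul _ _ _).symm
    _ = toQ R (r * e) := by rw [toQ_eq_iff.2 m1, toQ_eq_iff.2 m2]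
    _ = toQ R r * toQ R e := map_mul _ _ _

private lemma cornerB {Q : Type*} [Ring Q] {A B C E F : Q}
    (hE : E = C * B) (hF : F = B * C) (hC : C = A - A * A)
    (hEE : E * E = E) (hBE : B * E = B) (hFB : F * B = B)
    (cenE : ∀ t, E * t = t * E) (cenF : ∀ t, F * t = t * F) :
    (E * (A * E)) * E = A * E ∧
    (A * E) * ((E - A * E) * (B * E)) = E ∧
    ((B * E) * (E - A * E)) * (A * E) = E ∧
    (A * E - E) * (-((A * E) * (B * E))) = E ∧
    (-((B * E) * (A * E))) * (A * E - E) = E := by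
  have hEB : E * B = B := (cenE B).trans hBE
  have hFE2 : F * E = E := by
    calc F * E = F * (C * B) := by rw [hE]
      _ = (F * C) * B := by rw [mul_assoc]
      _ = (C * F) * B := by rw [cenF C]
      _ = C * (F * B) := by rw [mul_assoc]
      _ = C * B := by rw [hFB]
      _ = E := hE.symm
  have hXY : (C * E) * (B * E) = E := by
    calc (C * E) * (B * E) = C * (E * (B * E)) := by rw [mul_assoc]
      _ = C * ((E * B) * E) := by rw [← mul_assoc E B E]
      _ = C * (B * E) := by rw [hEB]
      _ = (C * B) * E := by rw [← mul_assoc]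
      _ = E * E := by rw [← hE]
      _ = E := hEE
  have hYX : (B * E) * (C * E) = E := by
    calc (B * E) * (C * E) = B * (E * (C * E)) := by rw [mul_assoc]
      _ = B * ((E * C) * E) := by rw [← mul_assoc E C E]
      _ = B * ((C * E) * E) := by rw [cenE C]
      _ = B * (C * (E * E)) := by rw [mul_assoc C E E]
      _ = B * (C * E) := by rw [hEE]
      _ = (B * C) * E := by rw [← mul_assoc]
      _ = F * E := by rw [← hF]
      _ = E := hFE2
  have hAEE : (A * E) * E = A * E := by rw [mul_assoc, hEE]
  have hEAE : E * (A * E) = A * E := by rw [← mul_assoc, cenE A]; exact hAEE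
  have hVAE : (A * E) * (A * E) = (A * A) * E := by
    calc (A * E) * (A * E) = A * (E * (A * E)) := by rw [mul_assoc]
      _ = A * (A * E) := by rw [hEAE]
      _ = (A * A) * E := by rw [← mul_assoc]
  have hVmE : (A * E) * (E - A * E) = C * E := by
    calc (A * E) * (E - A * E) = (A * E) * E - (A * E) * (A * E) := by rw [mul_sub]
      _ = A * E - (A * A) * E := by rw [hAEE, hVAE]
      _ = (A - A * A) * E := by rw [sub_mul]
      _ = C * E := by rw [← hC]
  have hmEV : (E - A * E) * (A * E) = C * E := by
    calc (E - A * E) * (A * E) = E * (A * E) - (A * E) * (A * E) := by rw [sub_mul]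
      _ = A * E - (A * A) * E := by rw [hEAE, hVAE]
      _ = (A - A * A) * E := by rw [sub_mul]
      _ = C * E := by rw [← hC]
  refine ⟨?_, ?_, ?_, ?_, ?_⟩
  · rw [hEAE, hAEE]
  · rw [← mul_assoc, hVmE]; exact hXY
  · rw [mul_assoc, hmEV]; exact hYX
  · calc (A * E - E) * (-((A * E) * (B * E)))
        = -((A * E - E) * ((A * E) * (B * E))) := by rw [mul_neg]
      _ = (E - A * E) * ((A * E) * (B * E)) := by rw [← neg_mul, neg_sub]
      _ = ((E - A * E) * (A * E)) * (B * E) := by rw [← mul_assoc]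
      _ = (C * E) * (B * E) := by rw [hmEV]
      _ = E := hXY
  · calc (-((B * E) * (A * E))) * (A * E - E)
        = -(((B * E) * (A * E)) * (A * E - E)) := by rw [neg_mul]
      _ = ((B * E) * (A * E)) * (E - A * E) := by rw [← mul_neg, neg_sub]
      _ = (B * E) * ((A * E) * (E - A * E)) := by rw [mul_assoc]
      _ = (B * E) * (C * E) := by rw [hVmE]
      _ = E := hYX

private lemma sub_sq_mem_J (hpot : Potent R) (h : IsUUSC R) (a : R) :
    a - a * a ∈ jacobsonRad R := by
  set c : R := a - a * a with hc_def
  by_contra hc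
  obtain ⟨b, hbcb, he, hf, heJ⟩ := harvest hpot.1 hc
  have cenE := central_of_idem hpot.1 hpot.2 h he
  have cenF := central_of_idem hpot.1 hpot.2 h hf
  have hb' : b * (c * b) = b := by rw [← mul_assoc]; exact hbcb
  obtain ⟨c1, c2, c3, c4, c5⟩ := cornerB (A := toQ R a) (B := toQ R b) (C := toQ R c)
    (E := toQ R c * toQ R b) (F := toQ R b * toQ R c) rfl rfl
    (by rw [hc_def]; simp only [map_sub, map_mul])
    (by simp only [← map_mul]; exact congrArg (toQ R) he)
    (by simp only [← map_mul]; exact congrArg (toQ R) hb')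
    (by simp only [← map_mul]; exact congrArg (toQ R) hbcb)
    (fun t => by have := cenE t; rwa [map_mul] at this)
    (fun t => by have := cenF t; rwa [map_mul] at this)
  exact key h he heJ
    (v := a * (c * b))
    (w := ((c * b) - a * (c * b)) * (b * (c * b)))
    (w' := (b * (c * b)) * ((c * b) - a * (c * b)))
    (w₂ := -((a * (c * b)) * (b * (c * b))))
    (w₂' := -((b * (c * b)) * (a * (c * b))))
    (by simp only [map_mul]; exact c1)
    (by simp only [map_mul, map_sub]; exact c2)
    (by simp only [map_mul, map_sub]; exact c3)
    (by simp only [map_mul, map_sub, map_neg]; exact c4)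
    (by simp only [map_mul, map_sub, map_neg]; exact c5)


private lemma commutator_mem (hpot : Potent R) (h : IsUUSC R) (x y : R) :
    x * y - y * x ∈ jacobsonRad R := by
  have L1 := sub_sq_mem_J hpot h
  have s1 : ∀ u v : R, u * v + v * u ∈ jacobsonRad R := by
    intro u v
    have hiden : u * v + v * u =
        ((u - u * u) + (v - v * v)) - ((u + v) - (u + v) * (u + v)) := by noncomm_ring
    rw [hiden]
    exact (jacobsonRad R).sub_mem ((jacobsonRad R).add_mem (L1 u) (L1 v)) (L1 (u + v))
  have s2 : ∀ z : R, z + z ∈ jacobsonRad R := by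
    intro z
    have := s1 z 1
    rwa [mul_one, one_mul] at this
  have hiden2 : x * y - y * x = (x * y + y * x) - (y * x + y * x) := by abel
  rw [hiden2]
  exact (jacobsonRad R).sub_mem (s1 x y) (s2 (y * x))

private lemma J_le_max_left {M : Ideal R} (hM : M.IsMaximal) {x : R}
    (hx : x ∈ jacobsonRad R) : x ∈ M := by
  have h1 : x ∈ TwoSidedIdeal.asIdeal (TwoSidedIdeal.jacobson (⊥ : TwoSidedIdeal R)) :=
    TwoSidedIdeal.mem_asIdeal.2 hx
  rw [TwoSidedIdeal.asIdeal_jacobson] at h1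
  have h2 : TwoSidedIdeal.asIdeal (⊥ : TwoSidedIdeal R) = (⊥ : Ideal R) := by
    ext y; simp [TwoSidedIdeal.mem_bot]
  rw [h2] at h1
  exact (sInf_le ⟨bot_le, hM⟩ : Ideal.jacobson (⊥ : Ideal R) ≤ M) h1

private lemma J_le_coatom_right {I : Submodule Rᵐᵒᵖ R} (hI : IsCoatom I) {x : R}
    (hx : x ∈ jacobsonRad R) : x ∈ I := by
  by_contra hxI
  have hjsup : x ∈ I ⊔ Submodule.span Rᵐᵒᵖ {x} :=
    Submodule.mem_sup_right (Submodule.mem_span_singleton_self x)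
  have hne : I ≠ I ⊔ Submodule.span Rᵐᵒᵖ {x} := fun hEq => hxI (by rw [hEq]; exact hjsup)
  have htop : I ⊔ Submodule.span Rᵐᵒᵖ {x} = ⊤ :=
    hI.2 _ (lt_of_le_of_ne le_sup_left hne)
  have h1 : (1 : R) ∈ I ⊔ Submodule.span Rᵐᵒᵖ {x} := by rw [htop]; exact Submodule.mem_top
  obtain ⟨y, hy, z, hz, hyz⟩ := Submodule.mem_sup.1 h1
  obtain ⟨m, hm⟩ := Submodule.mem_span_singleton.1 hz
  have hzJ : z ∈ jacobsonRad R := by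
    rw [MulOpposite.smul_eq_mul_unop] at hm
    rw [← hm]
    exact (jacobsonRad R).mul_mem_right x m.unop hx
  have hyu : IsUnit y := by
    have hy1 : y = 1 + -z := by rw [← hyz]; abel
    rw [hy1]; exact isUnit_one_add ((jacobsonRad R).neg_mem hzJ)
  obtain ⟨uy, huy⟩ := hyu
  have h1I : (1 : R) ∈ I := by
    have hmem := I.smul_mem (MulOpposite.op ((↑uy⁻¹ : R))) hy
    rw [MulOpposite.smul_eq_mul_unop, MulOpposite.unop_op] at hmem
    rwa [show y * (↑uy⁻¹ : R) = 1 from by rw [← huy]; exact uy.mul_inv] at hmem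
  refine hI.1 (Submodule.eq_top_iff'.2 fun r => ?_)
  have hmem := I.smul_mem (MulOpposite.op r) h1I
  rwa [MulOpposite.smul_eq_mul_unop, MulOpposite.unop_op, one_mul] at hmem

end Aux

/-- Corollary 3.2: every potent UUSC ring is left and right quasi-duo: every maximal
left ideal and every maximal right ideal is a two-sided ideal. -/
theorem stmt_10 (R : Type*) [Ring R] (hpot : Potent R) (h : IsUUSC R) :
    (∀ I : Ideal R, I.IsMaximal → ∀ x ∈ I, ∀ r : R, x * r ∈ I) ∧
    (∀ I : Submodule Rᵐᵒᵖ R, IsCoatom I → ∀ x ∈ I, ∀ r : R, r * x ∈ I) := by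
  constructor
  · intro I hImax x hx r
    have hcomm := commutator_mem hpot h x r
    have h1 : x * r - r * x ∈ I := J_le_max_left hImax hcomm
    have h2 : r * x ∈ I := by
      have := I.smul_mem r hx; rwa [smul_eq_mul] at this
    have heq : x * r = (x * r - r * x) + r * x := by abel
    rw [heq]; exact I.add_mem h1 h2
  · intro I hco x hx r
    have hcomm := commutator_mem hpot h x r
    have h1 : x * r ∈ I := by
      have := I.smul_mem (MulOpposite.op r) hx
      rwa [MulOpposite.smul_eq_mul_unop, MulOpposite.unop_op] at this
    have h2 : x * r - r * x ∈ I := J_le_coatom_right hco hcomm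
    have heq : r * x = x * r - (x * r - r * x) := by abel
    rw [heq]; exact Submodule.sub_mem I h1 h2
end

section
/- Let R be a von Neumann regular ring. Then R is UUSC if and only if R is Boolean. -/
section USCAuxSec
variable {R : Type*} [Ring R]
private lemma mkUnit' (u v : R) (h1 : u * v = 1) (h2 : v * u = 1) : IsUnit u :=
  ⟨⟨u, v, h1, h2⟩, rfl⟩

private lemma corner_mul' (g γ δ : R) (hgg : g*g = g)
    (hγg : γ*g = γ) (hgδ : g*δ = δ) (hγδ : γ*δ = g) :
    (γ + 1 - g) * (δ + 1 - g) = 1 := by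
  have h : (γ + 1 - g) * (δ + 1 - g) =
      γ*δ + γ - γ*g + (δ + 1 - g) - (g*δ + g - g*g) := by noncomm_ring
  rw [h, hγδ, hγg, hgδ, hgg]; abel

private lemma central_aux
    (P : ∀ u f : R, IsUnit u → f*f = f → u*f = f*u → IsUnit (u - f) → f = 0)
    (two : (2:R) = 0)
    (n z : R) (hnn : n*n = 0) (hzz : z*z = 0) (hnzn : n*z*n = n) (hznz : z*n*z = z) :
    n = 0 := by
  have hdb : ∀ t : R, t + t = 0 := fun t => by rw [← two_mul, two, zero_mul]
  have a1 : n*(n*z) = 0 := by rw [← mul_assoc, hnn, zero_mul]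
  have a2 : z*(n*z) = z := by rw [← mul_assoc]; exact hznz
  have a3 : (z*n)*n = 0 := by rw [mul_assoc, hnn, mul_zero]
  have a4 : (z*n)*z = z := hznz
  have a5 : (z*n)*(n*z) = 0 := by rw [mul_assoc, a1, mul_zero]
  have a6 : n*(z*n) = n := by rw [← mul_assoc]; exact hnzn
  have a7 : (n*z)*n = n := hnzn
  have a8 : z*(z*n) = 0 := by rw [← mul_assoc, hzz, zero_mul]
  have a9 : (n*z)*z = 0 := by rw [mul_assoc, hzz, mul_zero]
  have a10 : (n*z)*(z*n) = 0 := by rw [mul_assoc, a8, mul_zero]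
  have a11 : (n*z)*(n*z) = n*z := by rw [mul_assoc, a2]
  have a12 : (z*n)*(z*n) = z*n := by rw [mul_assoc, a6]
  have hgg : (n*z + z*n)*(n*z + z*n) = n*z + z*n := by
    have h : (n*z + z*n)*(n*z + z*n) =
        (n*z)*(n*z) + (n*z)*(z*n) + ((z*n)*(n*z) + (z*n)*(z*n)) := by noncomm_ring
    rw [h, a11, a10, a5, a12]; abel
  have hγg : (n + z + z*n)*(n*z + z*n) = n + z + z*n := by
    have h : (n + z + z*n)*(n*z + z*n) =
        n*(n*z) + n*(z*n) + (z*(n*z) + z*(z*n)) + ((z*n)*(n*z) + (z*n)*(z*n)) := by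
      noncomm_ring
    rw [h, a1, a6, a2, a8, a5, a12]; abel
  have hgγ : (n*z + z*n)*(n + z + z*n) = n + z + z*n := by
    have h : (n*z + z*n)*(n + z + z*n) =
        (n*z)*n + (n*z)*z + (n*z)*(z*n) + ((z*n)*n + (z*n)*z + (z*n)*(z*n)) := by
      noncomm_ring
    rw [h, a7, a9, a10, a3, a4, a12]; abel
  have hδg : (n + z + n*z)*(n*z + z*n) = n + z + n*z := by
    have h : (n + z + n*z)*(n*z + z*n) =
        n*(n*z) + n*(z*n) + (z*(n*z) + z*(z*n)) + ((n*z)*(n*z) + (n*z)*(z*n)) := by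
      noncomm_ring
    rw [h, a1, a6, a2, a8, a11, a10]; abel
  have hgδ : (n*z + z*n)*(n + z + n*z) = n + z + n*z := by
    have h : (n*z + z*n)*(n + z + n*z) =
        (n*z)*n + (n*z)*z + (n*z)*(n*z) + ((z*n)*n + (z*n)*z + (z*n)*(n*z)) := by
      noncomm_ring
    rw [h, a7, a9, a11, a3, a4, a5]; abel
  have hγδ : (n + z + z*n)*(n + z + n*z) = n*z + z*n := by
    have h : (n + z + z*n)*(n + z + n*z) =
        n*n + n*z + n*(n*z) + (z*n + z*z + z*(n*z)) + ((z*n)*n + (z*n)*z + (z*n)*(n*z)) := by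
      noncomm_ring
    rw [h, hnn, a1, hzz, a2, a3, a4, a5]
    have fin : (0:R) + n*z + 0 + (z*n + 0 + z) + (0 + z + 0) = n*z + z*n + (z + z) := by
      abel
    rw [fin, hdb z, add_zero]
  have hδγ : (n + z + n*z)*(n + z + z*n) = n*z + z*n := by
    have h : (n + z + n*z)*(n + z + z*n) =
        n*n + n*z + n*(z*n) + (z*n + z*z + z*(z*n)) + ((n*z)*n + (n*z)*z + (n*z)*(z*n)) := by
      noncomm_ring
    rw [h, hnn, a6, hzz, a8, a7, a9, a10]
    have fin : (0:R) + n*z + n + (z*n + 0 + 0) + (n + 0 + 0) = n*z + z*n + (n + n) := by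
      abel
    rw [fin, hdb n, add_zero]
  have p1 : ((n + z + z*n) + 1 - (n*z + z*n)) * ((n + z + n*z) + 1 - (n*z + z*n)) = 1 :=
    corner_mul' _ _ _ hgg hγg hgδ hγδ
  have p2 : ((n + z + n*z) + 1 - (n*z + z*n)) * ((n + z + z*n) + 1 - (n*z + z*n)) = 1 :=
    corner_mul' _ _ _ hgg hδg hgγ hδγ
  have hu : IsUnit ((n + z + z*n) + 1 - (n*z + z*n)) := mkUnit' _ _ p1 p2
  have hu' : IsUnit ((n + z + n*z) + 1 - (n*z + z*n)) := mkUnit' _ _ p2 p1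
  have hcm : ((n + z + z*n) + 1 - (n*z + z*n)) * (n*z + z*n)
      = (n*z + z*n) * ((n + z + z*n) + 1 - (n*z + z*n)) := by
    have l1 : ((n + z + z*n) + 1 - (n*z + z*n)) * (n*z + z*n)
        = (n + z + z*n)*(n*z + z*n) + (n*z + z*n) - (n*z + z*n)*(n*z + z*n) := by
      noncomm_ring
    have l2 : (n*z + z*n) * ((n + z + z*n) + 1 - (n*z + z*n))
        = (n*z + z*n)*(n + z + z*n) + (n*z + z*n) - (n*z + z*n)*(n*z + z*n) := by
      noncomm_ring
    rw [l1, l2, hγg, hgγ]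
  have hsub : ((n + z + z*n) + 1 - (n*z + z*n)) - (n*z + z*n)
      = ((n + z + n*z) + 1 - (n*z + z*n)) - (n*z + n*z) := by abel
  have hv : IsUnit (((n + z + z*n) + 1 - (n*z + z*n)) - (n*z + z*n)) := by
    rw [hsub, hdb (n*z), sub_zero]; exact hu'
  have hg0 : n*z + z*n = 0 := P _ _ hu hgg hcm hv
  have hnz0 : n*z = 0 := by
    have h : n*z = (n*z) * (n*z + z*n) := by rw [mul_add, a11, a10, add_zero]
    rw [hg0, mul_zero] at h; exact h
  rw [← a7, hnz0, zero_mul]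

variable {R : Type*} [Ring R]

private lemma semicentral
    (hreg : ∀ a : R, ∃ x : R, a * x * a = a)
    (P : ∀ u f : R, IsUnit u → f*f = f → u*f = f*u → IsUnit (u - f) → f = 0)
    (two : (2:R) = 0)
    (e r : R) (he : e*e = e) : e*r = e*r*e := by
  set n := e*r - e*r*e with hn
  obtain ⟨x, hx⟩ := hreg n
  have hen : e*n = n := by
    rw [hn, mul_sub, ← mul_assoc, he, ← mul_assoc, ← mul_assoc, he]
  have hne : n*e = 0 := by
    rw [hn, sub_mul, mul_assoc (e*r) e e, he, sub_self]
  have hnn : n*n = 0 := by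
    have h1 : n*e*n = n*n := by rw [mul_assoc, hen]
    rw [← h1, hne, zero_mul]
  -- z₁ = (1-e) x e
  set z₁ := x*e - e*(x*e) with hz₁
  have hez₁ : e*z₁ = 0 := by
    rw [hz₁, mul_sub, ← mul_assoc e e (x*e), he, sub_self]
  have hz₁e : z₁*e = z₁ := by
    rw [hz₁, sub_mul, mul_assoc x e e, he, mul_assoc e (x*e) e, mul_assoc x e e, he]
  have hnz₁ : n*z₁ = n*(x*e) := by
    rw [hz₁, mul_sub, ← mul_assoc n e (x*e), hne, zero_mul, sub_zero]
  have hnz₁n : n*z₁*n = n := by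
    rw [hnz₁, mul_assoc n (x*e) n, mul_assoc x e n, hen, ← mul_assoc]
    exact hx
  set z := z₁*n*z₁ with hz
  have hez : e*z = 0 := by
    rw [hz, ← mul_assoc, ← mul_assoc, hez₁, zero_mul, zero_mul]
  have hze : z*e = z := by
    rw [hz, mul_assoc (z₁*n) z₁ e, hz₁e]
  have hzz : z*z = 0 := by
    have h2 : z*(e*z) = z*z := by rw [← mul_assoc, hze]
    rw [← h2, hez, mul_zero]
  have hnz : n*z = n*z₁ := by
    rw [hz, ← mul_assoc, ← mul_assoc, hnz₁n]
  have hnzn : n*z*n = n := by rw [hnz]; exact hnz₁n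
  have hzn : z*n = z₁*n := by
    rw [hz, mul_assoc z₁ n z₁, mul_assoc z₁ (n*z₁) n, hnz₁n]
  have h12 : (z₁*n)*(z₁*n) = z₁*n := by
    rw [mul_assoc z₁ n (z₁*n), ← mul_assoc n z₁ n, hnz₁n]
  have hznz : z*n*z = z := by
    rw [hzn, hz, ← mul_assoc, h12]
  have hn0 : n = 0 := central_aux P two n z hnn hzz hnzn hznz
  have := sub_eq_zero.mp (hn.symm.trans hn0 : e*r - e*r*e = 0)
  exact this

private lemma central_of
    (semic : ∀ e r : R, e*e = e → e*r = e*r*e)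
    (e r : R) (he : e*e = e) : e*r = r*e := by
  have h1 : e*r = e*r*e := semic e r he
  have hie : (1-e)*(1-e) = 1-e := by
    have h : (1-e)*(1-e) = 1 - e - e + e*e := by noncomm_ring
    rw [h, he]; abel
  have h2 : (1-e)*r = (1-e)*r*(1-e) := semic (1-e) r hie
  have exp1 : (1-e)*r = r - e*r := by noncomm_ring
  have exp2 : (1-e)*r*(1-e) = r - e*r - r*e + e*r*e := by noncomm_ring
  have exp2' : (r - e*r)*(1-e) = r - e*r - r*e + e*r*e := by noncomm_ring
  rw [exp1, exp2'] at h2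
  have h3 : r*e - e*r*e = 0 := by
    have h4 : r*e - e*r*e = (r - e*r) - (r - e*r - r*e + e*r*e) := by abel
    rw [h4, ← h2, sub_self]
  rw [h1]
  exact (sub_eq_zero.mp h3).symm

private lemma reg_norm (a x : R) (h : a*x*a = a) :
    a*(x*a*x)*a = a ∧ (x*a*x)*a*(x*a*x) = x*a*x := by
  have h' : a*(x*a) = a := by rw [← mul_assoc, h]
  have hcontr : ∀ t : R, a*(x*(a*t)) = a*t := fun t => by
    rw [← mul_assoc, ← mul_assoc, h]
  constructor
  · simp only [mul_assoc]
    rw [h', h']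
  · simp only [mul_assoc]
    rw [hcontr, hcontr]

private lemma reg_unit_aux (central : ∀ e r : R, e*e = e → e*r = r*e)
    (a x : R) (h1 : a*x*a = a) (h2 : x*a*x = x) :
    (a + 1 - a*x) * (x + 1 - a*x) = 1 ∧ (x + 1 - a*x) * (a + 1 - a*x) = 1 := by
  have he : (a*x)*(a*x) = a*x := by rw [← mul_assoc, h1]
  have hxe : x*(a*x) = x := by rw [← mul_assoc]; exact h2
  have hae : a*(a*x) = a := by
    rw [← central (a*x) a he]; exact h1
  have hex : (a*x)*x = x := by rw [central (a*x) x he]; exact hxe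
  have hf : (x*a)*(x*a) = x*a := by rw [← mul_assoc, h2]
  have hfe : x*a = a*x := by
    have hef1 : (a*x)*(x*a) = x*a := by rw [← mul_assoc, hex]
    have hef2 : (a*x)*(x*a) = a*x := by
      rw [mul_assoc a x (x*a), ← central (x*a) x hf, h2]
    rw [← hef1, hef2]
  constructor
  · have hexp : (a + 1 - a*x) * (x + 1 - a*x) =
        a*x + a - a*(a*x) + (x + 1 - a*x) - ((a*x)*x + a*x - (a*x)*(a*x)) := by
      noncomm_ring
    rw [hexp, hae, hex, he]; abel
  · have hexp : (x + 1 - a*x) * (a + 1 - a*x) =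
        x*a + x - x*(a*x) + (a + 1 - a*x) - ((a*x)*a + a*x - (a*x)*(a*x)) := by
      noncomm_ring
    rw [hexp, hfe, hxe, h1, he]; abel

end USCAuxSec

/-- Corollary 3.3: a von Neumann regular ring is UUSC iff it is Boolean. -/
theorem stmt_11 (R : Type*) [Ring R] (hreg : ∀ a : R, ∃ x : R, a * x * a = a) :
    IsUUSC R ↔ ∀ a : R, IsIdempotentElem a := by
  constructor
  · intro hU
    have mkU : ∀ u v : R, u * v = 1 → v * u = 1 → IsUnit u := fun u v h1 h2 => mkUnit' u v h1 h2
    have P : ∀ u f : R, IsUnit u → f*f = f → u*f = f*u → IsUnit (u - f) → f = 0 := by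
      intro u f hu hf hc hv
      obtain ⟨e, -, huniq⟩ := hU u hu
      have h0 : (0:R) = e := huniq 0 ⟨show (0:R)*0 = 0 from mul_zero 0,
        by rw [sub_zero]; exact hu, by rw [mul_zero, zero_mul]⟩
      have hf2 : f = e := huniq f ⟨hf, hv, hc⟩
      rw [hf2, ← h0]
    have two : (2:R) = 0 := by
      obtain ⟨y, hy⟩ := hreg 2
      have c2 : ∀ t : R, (2:R)*t = t*2 := fun t => by rw [two_mul, mul_two]
      have he : (2*y)*(2*y) = 2*y := by rw [← mul_assoc, hy]
      have h2e : (2:R)*(2*y) = 2 := by rw [c2, hy]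
      have hez : (2*y)*((2*y)*y*(2*y)) = (2*y)*y*(2*y) := by
        rw [← mul_assoc (2*y) ((2*y)*y) (2*y), ← mul_assoc (2*y) (2*y) y, he]
      have hze : ((2*y)*y*(2*y))*(2*y) = (2*y)*y*(2*y) := by
        rw [mul_assoc ((2*y)*y) (2*y) (2*y), he]
      have h2z : (2:R)*((2*y)*y*(2*y)) = 2*y := by
        rw [← mul_assoc 2 ((2*y)*y) (2*y), ← mul_assoc 2 (2*y) y, h2e, he]
      have p1 : (1 + 2*y)*(1 - 2*y + (2*y)*y*(2*y)) = 1 := by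
        have hexp : (1 + 2*y)*(1 - 2*y + (2*y)*y*(2*y)) =
            1 - 2*y + (2*y)*y*(2*y) + (2*y - (2*y)*(2*y) + (2*y)*((2*y)*y*(2*y))) := by
          noncomm_ring
        rw [hexp, he, hez]
        have fin : (1:R) - 2*y + (2*y)*y*(2*y) + (2*y - 2*y + (2*y)*y*(2*y))
            = 1 - 2*y + ((2*y)*y*(2*y) + (2*y)*y*(2*y)) := by abel
        rw [fin, ← two_mul, h2z]
        abel
      have p2 : (1 - 2*y + (2*y)*y*(2*y))*(1 + 2*y) = 1 := by
        have hexp : (1 - 2*y + (2*y)*y*(2*y))*(1 + 2*y) =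
            1 - 2*y + (2*y)*y*(2*y) + (2*y - (2*y)*(2*y) + ((2*y)*y*(2*y))*(2*y)) := by
          noncomm_ring
        rw [hexp, he, hze]
        have fin : (1:R) - 2*y + (2*y)*y*(2*y) + (2*y - 2*y + (2*y)*y*(2*y))
            = 1 - 2*y + ((2*y)*y*(2*y) + (2*y)*y*(2*y)) := by abel
        rw [fin, ← two_mul, h2z]
        abel
      have hu1 : IsUnit (1 + 2*y) := mkUnit' _ _ p1 p2
      have hcm : (1 + 2*y)*(2*y) = (2*y)*(1 + 2*y) := by noncomm_ring
      have hvv : IsUnit ((1 + 2*y) - 2*y) := by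
        have h11 : (1:R) + 2*y - 2*y = 1 := by abel
        rw [h11]; exact isUnit_one
      have hey : (2:R)*y = 0 := P _ _ hu1 he hcm hvv
      rw [← hy, hey, zero_mul]
    have semic : ∀ e r : R, e*e = e → e*r = e*r*e := fun e r he =>
      semicentral hreg P two e r he
    have central : ∀ e r : R, e*e = e → e*r = r*e := fun e r he =>
      central_of semic e r he
    have unit_one : ∀ u : R, IsUnit u → u = 1 := by
      intro u hu
      obtain ⟨x0, hx0⟩ := hreg (u - 1)
      obtain ⟨hb1, hb2⟩ := reg_norm (u-1) x0 hx0
      obtain ⟨p1, p2⟩ := reg_unit_aux central (u-1) (x0*(u-1)*x0) hb1 hb2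
      have hee : ((u-1)*(x0*(u-1)*x0))*((u-1)*(x0*(u-1)*x0)) = (u-1)*(x0*(u-1)*x0) := by
        rw [← mul_assoc, hb1]
      have hvu : IsUnit (u - (u-1)*(x0*(u-1)*x0)) := by
        have h : u - (u-1)*(x0*(u-1)*x0) = (u-1) + 1 - (u-1)*(x0*(u-1)*x0) := by abel
        rw [h]; exact mkUnit' _ _ p1 p2
      have hcm : u * ((u-1)*(x0*(u-1)*x0)) = ((u-1)*(x0*(u-1)*x0)) * u :=
        (central _ u hee).symm
      have he0 : (u-1)*(x0*(u-1)*x0) = 0 := P u _ hu hee hcm hvu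
      have hb0 : (u - 1 : R) = 0 := by
        have h := hb1
        rw [he0, zero_mul] at h
        exact h.symm
      exact sub_eq_zero.mp hb0
    intro a
    obtain ⟨x0, hx0⟩ := hreg a
    obtain ⟨h1, h2⟩ := reg_norm a x0 hx0
    obtain ⟨p1, p2⟩ := reg_unit_aux central a (x0*a*x0) h1 h2
    have hv1 : a + 1 - a*(x0*a*x0) = 1 := unit_one _ (mkUnit' _ _ p1 p2)
    have ha : a = a*(x0*a*x0) := by
      have h3 : a - a*(x0*a*x0) = (a + 1 - a*(x0*a*x0)) - 1 := by abel
      rw [hv1, sub_self] at h3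
      exact sub_eq_zero.mp h3
    have hee : (a*(x0*a*x0))*(a*(x0*a*x0)) = a*(x0*a*x0) := by
      rw [← mul_assoc, h1]
    show a * a = a
    rw [ha]
    exact hee
  · intro hB a ha
    have haa : a*a = a := hB a
    obtain ⟨U, hUa⟩ := ha
    have hainv : a * ↑U⁻¹ = 1 := by rw [← hUa]; exact U.mul_inv
    have ha1 : a = 1 := by
      calc a = a * 1 := (mul_one a).symm
        _ = a * (a * ↑U⁻¹) := by rw [hainv]
        _ = a*a * ↑U⁻¹ := by rw [mul_assoc]
        _ = a * ↑U⁻¹ := by rw [haa]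
        _ = 1 := hainv
    refine ⟨0, ⟨show (0:R)*0 = 0 from mul_zero 0, by rw [sub_zero]; exact ⟨U, hUa⟩,
      by rw [mul_zero, zero_mul]⟩, ?_⟩
    rintro f ⟨hf, hvf, -⟩
    have hf2 : f*f = f := hf
    rw [ha1] at hvf
    obtain ⟨W, hW⟩ := hvf
    have hif : (1 - f)*(1-f) = 1 - f := by
      have hexp : (1-f)*(1-f) = 1 - f - f + f*f := by noncomm_ring
      rw [hexp, hf2]; abel
    have hinv : (1-f) * ↑W⁻¹ = 1 := by rw [← hW]; exact W.mul_inv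
    have hone : (1:R) - f = 1 := by
      calc (1:R) - f = (1-f)*(1-f) * ↑W⁻¹ := by rw [mul_assoc, hinv, mul_one]
        _ = (1-f) * ↑W⁻¹ := by rw [hif]
        _ = 1 := hinv
    exact sub_eq_self.mp hone
end

section
/- Let R be a ring which is CUSC (respectively, UUSC) and semi-potent. Then 2 ∈ J(R). -/
lemma uusc_semipotent_two_mem {R : Type*} [Ring R] (hU : IsUUSC R) (hS : Semipotent R) :
    (2 : R) ∈ jacobsonRad R := by
  by_contra h2
  have hI : ¬ ((Ideal.span {(2 : R)} : Ideal R) : Set R) ⊆ (jacobsonRad R : Set R) := by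
    intro hsub
    exact h2 (hsub (Ideal.mem_span_singleton_self _))
  obtain ⟨e, heI, hne, hid⟩ := hS.1 _ hI
  obtain ⟨t, ht⟩ := Submodule.mem_span_singleton.mp heI
  rw [smul_eq_mul] at ht
  have he : e * e = e := hid
  have het : e = t + t := by rw [← ht, mul_two]
  set s : R := e * t * e with hs_def
  have hss : s + s = e := by
    have : s + s = e * (t + t) * e := by rw [hs_def]; noncomm_ring
    rw [this, ← het, he, he]
  have hes : e * s = s := by rw [hs_def, ← mul_assoc, ← mul_assoc, he]
  have hse : s * e = s := by rw [hs_def, mul_assoc, mul_assoc, he, ← mul_assoc]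
  set a : R := 1 - e + s with ha_def
  have hab : a * (1 + e) = 1 := by
    have h1 : a * (1 + e) = 1 + e - (e + e * e) + (s + s * e) := by rw [ha_def]; noncomm_ring
    rw [h1, he, hse, hss]; abel
  have hba : (1 + e) * a = 1 := by
    have h1 : (1 + e) * a = 1 + e - (e + e * e) + (s + e * s) := by rw [ha_def]; noncomm_ring
    rw [h1, he, hes, hss]; abel
  have haU : IsUnit a := ⟨⟨a, 1 + e, hab, hba⟩, rfl⟩
  have haeU : IsUnit (a - e) := by
    refine ⟨⟨a - e, 1 - 3 * e, ?_, ?_⟩, rfl⟩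
    · have h1 : (a - e) * (1 - 3 * e) =
          1 - (e + e) - 3 * e + (3 * (e * e) + 3 * (e * e)) + s - 3 * (s * e) := by
        rw [ha_def]; noncomm_ring
      rw [h1, he, hse]
      have : (1 : R) - (e + e) - 3 * e + (3 * e + 3 * e) + s - 3 * s = 1 + e - (s + s) := by
        noncomm_ring
      rw [this, hss]; abel
    · have h1 : (1 - 3 * e) * (a - e) =
          1 - (e + e) - 3 * e + (3 * (e * e) + 3 * (e * e)) + s - 3 * (e * s) := by
        rw [ha_def]; noncomm_ring
      rw [h1, he, hes]
      have : (1 : R) - (e + e) - 3 * e + (3 * e + 3 * e) + s - 3 * s = 1 + e - (s + s) := by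
        noncomm_ring
      rw [this, hss]; abel
  have hcomm : a * e = e * a := by
    have h1 : a * e = e - e * e + s * e := by rw [ha_def]; noncomm_ring
    have h2 : e * a = e - e * e + e * s := by rw [ha_def]; noncomm_ring
    rw [h1, h2, hes, hse]
  obtain ⟨f, _, huniq⟩ := hU a haU
  have heq1 : e = f := huniq e ⟨hid, haeU, hcomm⟩
  have heq2 : (0 : R) = f := huniq 0 ⟨IsIdempotentElem.zero, by simpa using haU, by simp⟩
  exact hne (heq1.trans heq2.symm)

/-- Theorem 3.5: if `R` is CUSC (resp. UUSC) and semi-potent, then `2 ∈ J(R)`. -/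
theorem stmt_13 (R : Type*) [Ring R] :
    (IsCUSC R ∧ Semipotent R → (2 : R) ∈ jacobsonRad R) ∧
    (IsUUSC R ∧ Semipotent R → (2 : R) ∈ jacobsonRad R) := by
  have key : IsUUSC R → Semipotent R → (2 : R) ∈ jacobsonRad R := uusc_semipotent_two_mem
  constructor
  · rintro ⟨hC, hS⟩
    exact key (fun a ha => hC a ⟨0, IsIdempotentElem.zero, by simpa using ha⟩) hS
  · rintro ⟨hU, hS⟩
    exact key hU hS
end

section
/- Let R be a CUSC (respectively, UUSC) ring. Then for any integer n > 1 there does not exist a nonzero idempotent e of R such that the corner ring eRe is isomorphic to the full n × n matrix ring M_n(S) over some nontrivial ring S. -/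
/-- The corner `eRe` of a ring determined by an idempotent `e`, as a non-unital subring
(it is a ring with identity element `e`). -/
def cornerSubring {R : Type*} [Ring R] (e : R) : NonUnitalSubring R where
  carrier := {x | e * x = x ∧ x * e = x}
  zero_mem' := ⟨mul_zero e, zero_mul e⟩
  add_mem' := fun {a b} ha hb => ⟨by rw [mul_add, ha.1, hb.1], by rw [add_mul, ha.2, hb.2]⟩
  neg_mem' := fun {a} ha => ⟨by rw [mul_neg, ha.1], by rw [neg_mul, ha.2]⟩
  mul_mem' := fun {a b} ha hb => ⟨by rw [← mul_assoc, ha.1], by rw [mul_assoc, hb.2]⟩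

/-- Theorem 3.6(iii): in a CUSC (resp. UUSC) ring `R`, for no `n > 1` is there a nonzero
idempotent `e` with the corner ring `eRe` isomorphic to the full matrix ring `Mₙ(S)`
over some nontrivial ring `S`. -/
theorem stmt_15 {R : Type*} [Ring R] (h : IsCUSC R ∨ IsUUSC R) :
    ∀ n : ℕ, 1 < n → ∀ e : R, IsIdempotentElem e → e ≠ 0 →
      ∀ (S : Type*) [Ring S] [Nontrivial S],
        IsEmpty (cornerSubring e ≃+* Matrix (Fin n) (Fin n) S) := by
  intro n hn e he _he0 S _ _
  constructor
  intro φ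
  -- indices
  set i0 : Fin n := ⟨0, by omega⟩ with hi0
  set i1 : Fin n := ⟨1, by omega⟩ with hi1
  have h01 : i0 ≠ i1 := by simp [hi0, hi1, Fin.ext_iff]
  -- the matrices
  set f : Matrix (Fin n) (Fin n) S :=
    Matrix.single i0 i0 1 + Matrix.single i1 i1 1 with hf
  set v : Matrix (Fin n) (Fin n) S :=
    1 + Matrix.single i0 i1 1 + Matrix.single i1 i0 1
      - Matrix.single i1 i1 1 with hv
  have hvw : v * (v - f) = 1 := by
    simp only [hf, hv, mul_add, add_mul, mul_sub, sub_mul, one_mul, mul_one]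
    simp [h01, h01.symm]
    try abel
  have hwv : (v - f) * v = 1 := by
    simp only [hf, hv, mul_add, add_mul, mul_sub, sub_mul, one_mul, mul_one]
    simp [h01, h01.symm]
    try abel
  have hff : f * f = f := by
    simp only [hf, mul_add, add_mul]
    simp [h01, h01.symm]
  have hvf : v * f = f * v := by
    simp only [hf, hv, mul_add, add_mul, mul_sub, sub_mul, one_mul, mul_one]
    simp [h01, h01.symm]
    try abel
  have hfne : f ≠ 0 := by
    intro h0
    have : f i0 i0 = (1 : S) := by
      simp [hf, Matrix.single, h01.symm]
    rw [h0] at this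
    exact one_ne_zero this.symm
  -- the corner ring and its identity
  have heC : e ∈ cornerSubring e := ⟨he, he⟩
  set eC : cornerSubring e := ⟨e, heC⟩ with heCdef
  -- eC is a left and right identity of the corner
  have hleft : ∀ x : cornerSubring e, eC * x = x := by
    intro x; apply Subtype.ext; exact x.2.1
  have hright : ∀ x : cornerSubring e, x * eC = x := by
    intro x; apply Subtype.ext; exact x.2.2
  -- φ.symm 1 = eC
  have hone : φ.symm 1 = eC := by
    have h1 : eC * φ.symm 1 = φ.symm 1 := hleft _
    have h2 : eC * φ.symm 1 = eC := by
      apply φ.injective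
      rw [map_mul, φ.apply_symm_apply, mul_one]
    rw [h1] at h2; exact h2
  -- the elements of the corner
  set f₀ : cornerSubring e := φ.symm f with hf₀
  set v₀ : cornerSubring e := φ.symm v with hv₀
  set w₀ : cornerSubring e := φ.symm (v - f) with hw₀
  have hsub : v₀ - f₀ = w₀ := by rw [hv₀, hf₀, hw₀, ← map_sub]
  have hv₀w₀ : v₀ * w₀ = eC := by rw [hv₀, hw₀, ← map_mul, hvw, hone]
  have hw₀v₀ : w₀ * v₀ = eC := by rw [hv₀, hw₀, ← map_mul, hwv, hone]
  have hf₀f₀ : f₀ * f₀ = f₀ := by rw [hf₀, ← map_mul, hff]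
  have hv₀f₀ : v₀ * f₀ = f₀ * v₀ := by rw [hf₀, hv₀, ← map_mul, ← map_mul, hvf]
  -- pass to R
  set a : R := (v₀ : R) with ha
  set b : R := (w₀ : R) with hb
  set fR : R := (f₀ : R) with hfR
  have hab : a * b = e := congrArg Subtype.val hv₀w₀
  have hba : b * a = e := congrArg Subtype.val hw₀v₀
  have hfRfR : fR * fR = fR := congrArg Subtype.val hf₀f₀
  have hafR : a * fR = fR * a := congrArg Subtype.val hv₀f₀
  have habsub : a - fR = b := congrArg Subtype.val hsub
  have hae : a * e = a := v₀.2.2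
  have hea : e * a = a := v₀.2.1
  have hbe : b * e = b := w₀.2.2
  have heb : e * b = b := w₀.2.1
  have hfe : fR * e = fR := f₀.2.2
  have hef : e * fR = fR := f₀.2.1
  -- the unit u
  set u : R := a + (1 - e) with hu
  have key : ∀ x y : R, x * y = e → y * x = e → x * e = x → e * x = x →
      y * e = y → e * y = y → (x + (1 - e)) * (y + (1 - e)) = 1 := by
    intro x y hxy hyx hxe hex hye hey
    have : (x + (1 - e)) * (y + (1 - e))
        = x * y + x * (1 - e) + (1 - e) * y + (1 - e) * (1 - e) := by noncomm_ring
    rw [this, hxy]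
    have h2 : (1 - e) * (1 - e) = 1 - e := by
      rw [mul_sub, sub_mul, sub_mul, one_mul, one_mul, mul_one, he]; abel
    rw [mul_sub, mul_one, hxe, sub_mul, one_mul, hey, h2]
    abel
  have huunit : IsUnit u := by
    refine ⟨⟨u, b + (1 - e), ?_, ?_⟩, rfl⟩
    · exact key a b hab hba hae hea hbe heb
    · exact key b a hba hab hbe heb hae hea
  have husub : IsUnit (u - fR) := by
    have : u - fR = b + (1 - e) := by rw [hu, ← habsub]; abel
    rw [this]
    refine ⟨⟨b + (1 - e), a + (1 - e), ?_, ?_⟩, rfl⟩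
    · exact key b a hba hab hbe heb hae hea
    · exact key a b hab hba hae hea hbe heb
  have hcomm : u * fR = fR * u := by
    rw [hu, add_mul, mul_add, sub_mul, mul_sub, one_mul, mul_one, hef, hfe, hafR]
  -- u is uniquely strongly clean
  have husc : IsUSCleanElem u := by
    rcases h with hC | hU
    · exact hC u ⟨0, IsIdempotentElem.zero, by simpa using huunit⟩
    · exact hU u huunit
  obtain ⟨g, -, hgu⟩ := husc
  have h1 : fR = g := hgu fR ⟨hfRfR, husub, hcomm⟩
  have h2 : (0 : R) = g := hgu 0 ⟨IsIdempotentElem.zero, by simpa using huunit, by simp⟩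
  have hfR0 : fR = 0 := h1.trans h2.symm
  -- contradiction
  have : f₀ = 0 := Subtype.ext hfR0
  rw [hf₀] at this
  have : f = 0 := by
    have := congrArg φ this
    rwa [φ.apply_symm_apply, map_zero] at this
  exact hfne this
end
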